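/- arXiv:2105.14436 — 6 statements merged into one kernel-verified Lean document; each statement's English description precedes it below -/
import Mathlib

section
/- Let p be a prime number with p ≡ 3 (mod 4), and let (z, t) be the fundamental solution of the Pell equation z² − p·t² = 1 (i.e., z, t are positive integers with z² − p·t² = 1 and z is minimal among all positive solutions). Then z + 1 and t are odd integers. Moreover, if p ≡ 7 (mod 8) then z + 1 is a perfect square, and if p ≡ 3 (mod 8) then z + 1 = p·m² for some integer m. -/
lemma fact_helper1 (p : ℕ) (hp : p.Prime) (x y t : ℤ) (hx : 0 < x) (hy : 0 < y)
    (hco : IsCoprime x y) (h : x * y = (p : ℤ) * t ^ 2) (hdy : (p : ℤ) ∣ y) :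
    ∃ a b : ℤ, x = a ^ 2 ∧ y = (p : ℤ) * b ^ 2 := by
  have hp0 : (0 : ℤ) < (p : ℤ) := by exact_mod_cast hp.pos
  obtain ⟨k, hk⟩ := hdy
  have hk0 : 0 < k := by nlinarith
  have hc : x * k = t ^ 2 := by
    have h2 : (p : ℤ) * (x * k) = (p : ℤ) * t ^ 2 := by rw [← h, hk]; ring
    exact mul_left_cancel₀ (ne_of_gt hp0) h2
  have hcok : IsCoprime x k := hco.of_isCoprime_of_dvd_right ⟨(p : ℤ), by rw [hk]; ring⟩
  obtain ⟨a, ha⟩ := Int.sq_of_isCoprime hcok hc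
  obtain ⟨b, hb⟩ := Int.sq_of_isCoprime hcok.symm (by rw [← hc]; ring)
  refine ⟨a, b, ?_, ?_⟩
  · rcases ha with ha | ha
    · exact ha
    · nlinarith [sq_nonneg a]
  · rcases hb with hb | hb
    · rw [hk, hb]
    · nlinarith [sq_nonneg b]

lemma fact_helper (p : ℕ) (hp : p.Prime) (x y t : ℤ) (hx : 0 < x) (hy : 0 < y)
    (hco : IsCoprime x y) (h : x * y = (p : ℤ) * t ^ 2) :
    (∃ a b : ℤ, x = a ^ 2 ∧ y = (p : ℤ) * b ^ 2) ∨
    (∃ a b : ℤ, x = (p : ℤ) * b ^ 2 ∧ y = a ^ 2) := by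
  have hpz : Prime ((p : ℤ)) := Nat.prime_iff_prime_int.mp hp
  rcases hpz.dvd_mul.mp ⟨t ^ 2, h⟩ with hdx | hdy
  · right
    obtain ⟨a, b, h1, h2⟩ := fact_helper1 p hp y x t hy hx hco.symm (by rw [← h]; ring) hdx
    exact ⟨a, b, h2, h1⟩
  · left
    exact fact_helper1 p hp x y t hx hy hco h hdy

lemma res_helper (p : ℕ) (a c k : ℤ) (h : a ^ 2 = c + (p : ℤ) * k) :
    IsSquare (c : ZMod p) := by
  refine ⟨(a : ZMod p), ?_⟩
  have : ((a ^ 2 : ℤ) : ZMod p) = ((c + (p : ℤ) * k : ℤ) : ZMod p) := by rw [h]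
  push_cast at this
  simp [ZMod.natCast_self] at this
  rw [← this]; ring

theorem pell_fundamental_solution_props (p : ℕ) (hp : p.Prime) (hp4 : p % 4 = 3)
    (z t : ℤ) (hz : 0 < z) (ht : 0 < t) (hpell : z ^ 2 - (p : ℤ) * t ^ 2 = 1)
    (hmin : ∀ z' t' : ℤ, 0 < z' → 0 < t' → z' ^ 2 - (p : ℤ) * t' ^ 2 = 1 → z ≤ z') :
    Odd (z + 1) ∧ Odd t ∧
      (p % 8 = 7 → ∃ s : ℤ, z + 1 = s ^ 2) ∧
      (p % 8 = 3 → ∃ m : ℤ, z + 1 = (p : ℤ) * m ^ 2) := by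
  haveI : Fact p.Prime := ⟨hp⟩
  have hp3 : 3 ≤ p := by omega
  have hp3' : (3 : ℤ) ≤ (p : ℤ) := by exact_mod_cast hp3
  have hpodd : Odd ((p : ℤ)) := by
    have : p % 2 = 1 := by omega
    refine ⟨(p : ℤ) / 2, ?_⟩
    omega
  have ht1 : 1 ≤ t := ht
  have hz2 : 2 ≤ z := by nlinarith
  -- First: z is even.
  have hzeven : Even z := by
    by_contra hodd
    rw [Int.not_even_iff_odd] at hodd
    -- then t is even
    have hteven : Even t := by
      rcases Int.even_or_odd t with h | h
      · exact h
      · have h1 : Odd (z ^ 2) := hodd.pow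
        have h2 : Odd ((p : ℤ) * t ^ 2) := hpodd.mul h.pow
        have := h1.sub_odd h2
        rw [hpell] at this
        exact absurd this (by decide)
    obtain ⟨w, hw⟩ := hodd
    obtain ⟨u, hu⟩ := hteven
    have hw1 : 1 ≤ w := by omega
    have hu1 : 1 ≤ u := by omega
    have hprod : w * (w + 1) = (p : ℤ) * u ^ 2 := by
      have h4 : (4 : ℤ) * (w * (w + 1)) = 4 * ((p : ℤ) * u ^ 2) := by
        have : z = 2 * w + 1 := by omega
        subst this
        have : t = 2 * u := by omega
        subst this
        linear_combination hpell
      exact mul_left_cancel₀ (by norm_num) h4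
    have hco : IsCoprime w (w + 1) := ⟨-1, 1, by ring⟩
    rcases fact_helper p hp w (w + 1) u (by omega) (by omega) hco hprod with
      ⟨a, b, ha, hb⟩ | ⟨a, b, ha, hb⟩
    · -- w = a², w+1 = p b² : a² = -1 + p b², -1 is a square mod p
      have : IsSquare ((-1 : ℤ) : ZMod p) := res_helper p a (-1) (b ^ 2) (by omega)
      rw [Int.cast_neg, Int.cast_one, ZMod.exists_sq_eq_neg_one_iff] at this
      exact this hp4
    · -- w = p b², w+1 = a² : smaller solution
      have hb0 : b ≠ 0 := by
        intro h; rw [h] at ha; simp at ha; omega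
      have ha1 : 1 ≤ |a| := by
        have h0 : a ≠ 0 := by intro h; rw [h] at hb; simp at hb; omega
        exact Int.one_le_abs (by simpa using h0)
      have hpell' : |a| ^ 2 - (p : ℤ) * |b| ^ 2 = 1 := by
        rw [sq_abs, sq_abs]; linarith
      have := hmin |a| |b| (by omega) (abs_pos.mpr hb0) hpell'
      have : |a| ≤ a ^ 2 := by nlinarith [sq_abs a]
      omega
  -- z even: t odd
  have htodd : Odd t := by
    rcases Int.even_or_odd t with h | h
    · exfalso
      obtain ⟨w, hw⟩ := hzeven
      obtain ⟨u, hu⟩ := h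
      have h4 : (4 : ℤ) * (w ^ 2 - (p : ℤ) * u ^ 2) = 1 := by
        have hz' : z = 2 * w := by omega
        have ht' : t = 2 * u := by omega
        rw [hz', ht'] at hpell
        linear_combination hpell
      omega
    · exact h
  obtain ⟨w, hw⟩ := hzeven
  have hw' : z = 2 * w := by omega
  have hco : IsCoprime (z - 1) (z + 1) := ⟨w, 1 - w, by rw [hw']; ring⟩
  have hprod : (z - 1) * (z + 1) = (p : ℤ) * t ^ 2 := by linear_combination hpell
  have hzodd : Odd (z + 1) := by
    obtain ⟨u, hu⟩ := htodd
    exact ⟨w, by omega⟩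
  refine ⟨hzodd, htodd, ?_⟩
  rcases fact_helper p hp (z - 1) (z + 1) t (by omega) (by omega) hco hprod with
    ⟨a, b, ha, hb⟩ | ⟨a, b, ha, hb⟩
  · -- z - 1 = a², z + 1 = p b²
    constructor
    · intro h8
      exfalso
      have : IsSquare ((-2 : ℤ) : ZMod p) := res_helper p a (-2) (b ^ 2) (by omega)
      rw [show ((-2 : ℤ) : ZMod p) = (-2 : ZMod p) by push_cast; ring,
        ZMod.exists_sq_eq_neg_two_iff (by omega)] at this
      omega
    · intro _
      exact ⟨b, hb⟩
  · -- z - 1 = p b², z + 1 = a²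
    constructor
    · intro _
      exact ⟨a, hb⟩
    · intro h8
      exfalso
      have : IsSquare ((2 : ℤ) : ZMod p) := res_helper p a 2 (b ^ 2) (by omega)
      rw [show ((2 : ℤ) : ZMod p) = (2 : ZMod p) by push_cast; ring,
        ZMod.exists_sq_eq_two_iff (by omega)] at this
      omega
end

section
/- Let p and q be distinct prime numbers with p ≡ 1 (mod 4), q ≡ 1 (mod 4), and Legendre symbol (p/q) = −1. Then the negative Pell equation x² − pq·y² = −1 has a solution in integers x, y. -/
private lemma sq_emod_four (z : ℤ) : z ^ 2 % 4 = 0 ∨ z ^ 2 % 4 = 1 := by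
  rcases Int.even_or_odd z with ⟨m, rfl⟩ | ⟨m, rfl⟩
  · left
    have h : (m + m) ^ 2 = 4 * (m * m) := by ring
    rw [h]; omega
  · right
    have h : (2 * m + 1) ^ 2 = 4 * (m * m + m) + 1 := by ring
    rw [h]; omega

private lemma pos_of_mul_pos' {a b : ℤ} (ha : 0 < a) (h : 0 < a * b) : 0 < b := by
  rcases mul_pos_iff.mp h with h1 | h1
  · exact h1.2
  · linarith [h1.1]

private lemma split_sq {A B z : ℤ} (hco : IsCoprime A B) (h : A * B = z ^ 2)
    (hA : 0 < A) (hB : 0 < B) : ∃ a b : ℤ, 0 ≤ a ∧ 0 ≤ b ∧ A = a ^ 2 ∧ B = b ^ 2 := by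
  obtain ⟨a, ha⟩ := Int.sq_of_isCoprime hco h
  obtain ⟨b, hb⟩ := Int.sq_of_isCoprime hco.symm (by rwa [mul_comm] at h)
  refine ⟨|a|, |b|, abs_nonneg a, abs_nonneg b, ?_, ?_⟩
  · rcases ha with h1 | h1
    · rw [h1, sq_abs]
    · nlinarith [sq_nonneg a]
  · rcases hb with h1 | h1
    · rw [h1, sq_abs]
    · nlinarith [sq_nonneg b]

theorem negative_pell_solvable (p q : ℕ) [Fact p.Prime] [Fact q.Prime] (hpq : p ≠ q)
    (hp : p % 4 = 1) (hq : q % 4 = 1) (hleg : legendreSym q (p : ℤ) = -1) :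
    ∃ x y : ℤ, x ^ 2 - (p : ℤ) * q * y ^ 2 = -1 := by
  have hpp : p.Prime := Fact.out
  have hqp : q.Prime := Fact.out
  have hp2 : p ≠ 2 := by rintro rfl; omega
  have hq2 : q ≠ 2 := by rintro rfl; omega
  have hple : (2 : ℤ) ≤ p := by exact_mod_cast hpp.two_le
  have hqle : (2 : ℤ) ≤ q := by exact_mod_cast hqp.two_le
  have hppos : (0 : ℤ) < p := by omega
  have hqpos : (0 : ℤ) < q := by omega
  set d : ℤ := (p : ℤ) * q with hd
  have hd0 : 0 < d := by positivity
  have hdns : ¬ IsSquare d := by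
    rintro ⟨r, hr⟩
    have hsf : Squarefree d := by
      rw [hd, ← Nat.cast_mul, Int.squarefree_natCast]
      exact (Nat.squarefree_mul ((Nat.coprime_primes hpp hqp).mpr hpq)).mpr
        ⟨hpp.squarefree, hqp.squarefree⟩
    have hu : IsUnit r := hsf r (by rw [← hr])
    rw [hd] at hr
    rcases Int.isUnit_iff.mp hu with rfl | rfl <;> nlinarith
  have hd4 : d % 4 = 1 := by
    rw [hd, Int.mul_emod]
    have h1 : (p : ℤ) % 4 = 1 := by omega
    have h2 : (q : ℤ) % 4 = 1 := by omega
    rw [h1, h2]; decide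
  clear_value d
  obtain ⟨sol, hsol⟩ := Pell.IsFundamental.exists_of_not_isSquare hd0 hdns
  obtain ⟨hx1, hy0, hmin⟩ := hsol
  set X := sol.x with hXdef
  set Y := sol.y with hYdef
  have hprop : X ^ 2 - d * Y ^ 2 = 1 := sol.prop
  clear_value X Y
  -- Y is even
  obtain ⟨z, hz⟩ : ∃ z, Y = 2 * z := by
    rcases Int.even_or_odd Y with ⟨z, hz⟩ | ⟨z, hz⟩
    · exact ⟨z, by omega⟩
    · exfalso
      have hY4 : Y ^ 2 % 4 = 1 := by
        have h : Y ^ 2 = 4 * (z * z + z) + 1 := by rw [hz]; ring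
        rw [h]; omega
      have hX4 : X ^ 2 % 4 = 2 % 4 := by
        have h : X ^ 2 = 1 + d * Y ^ 2 := by linarith
        rw [h, Int.add_emod, Int.mul_emod, hd4, hY4]; decide
      rcases sq_emod_four X with h | h <;> omega
  have hz0 : 0 < z := by omega
  have hXX : X ^ 2 = 1 + 4 * (d * z ^ 2) := by
    rw [hz] at hprop; linear_combination hprop
  -- X is odd
  obtain ⟨m, hm⟩ : ∃ m, X = 2 * m + 1 := by
    rcases Int.even_or_odd X with ⟨m, hmm⟩ | ⟨m, hmm⟩
    · exfalso
      have e1 : X ^ 2 = 4 * (m * m) := by rw [hmm]; ring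
      rw [e1] at hXX
      generalize m * m = u at hXX
      generalize d * z ^ 2 = v at hXX
      omega
    · exact ⟨m, by omega⟩
  have hm1 : 1 ≤ m := by omega
  have hkey : m * (m + 1) = d * z ^ 2 := by
    have h4 : 4 * (m * (m + 1)) = 4 * (d * z ^ 2) := by
      rw [hm] at hXX; linear_combination hXX
    exact mul_left_cancel₀ (by norm_num : (4 : ℤ) ≠ 0) h4
  have hco : IsCoprime m (m + 1) := ⟨-1, 1, by ring⟩
  have hcopq : IsCoprime (p : ℤ) (q : ℤ) :=
    Nat.isCoprime_iff_coprime.mpr ((Nat.coprime_primes hpp hqp).mpr hpq)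
  have hpdvd : (p : ℤ) ∣ m * (m + 1) := by
    rw [hkey, hd]; exact Dvd.dvd.mul_right (dvd_mul_right _ _) _
  have hqdvd : (q : ℤ) ∣ m * (m + 1) := by
    rw [hkey, hd]; exact Dvd.dvd.mul_right (dvd_mul_left _ _) _
  rcases Int.Prime.dvd_mul' hpp hpdvd with hpm | hpm <;>
    rcases Int.Prime.dvd_mul' hqp hqdvd with hqm | hqm
  · -- p ∣ m, q ∣ m : descent, contradiction with minimality
    exfalso
    obtain ⟨A, hA⟩ : d ∣ m := hd ▸ hcopq.mul_dvd hpm hqm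
    have heq : A * (m + 1) = z ^ 2 := by
      apply mul_left_cancel₀ (ne_of_gt hd0)
      linear_combination hkey - (m + 1) * hA
    have hApos : 0 < A := pos_of_mul_pos' hd0 (by rw [← hA]; omega)
    obtain ⟨a, b, ha0, hb0, haa, hbb⟩ :=
      split_sq (hco.of_isCoprime_of_dvd_left ⟨d, by rw [hA, mul_comm]⟩) heq hApos (by omega)
    have hma : m = d * a ^ 2 := by rw [hA, haa]
    have hPell : b ^ 2 - d * a ^ 2 = 1 := by linear_combination hma - hbb
    have hb1 : 1 < b := by
      by_contra hcon
      push_neg at hcon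
      have h1 : b ^ 2 ≤ 1 := pow_le_one₀ hb0 hcon
      rw [← hbb] at h1
      omega
    have hblt : b < X := by
      nlinarith [mul_pos (by linarith : (0:ℤ) < b - 1) (by linarith : (0:ℤ) < b)]
    have hle := hmin (b := Pell.Solution₁.mk b a hPell) (by rwa [Pell.Solution₁.x_mk])
    rw [Pell.Solution₁.x_mk] at hle
    omega
  · -- p ∣ m, q ∣ m + 1
    exfalso
    obtain ⟨A, hA⟩ := hpm
    obtain ⟨B, hB⟩ := hqm
    have heq : A * B = z ^ 2 := by
      apply mul_left_cancel₀ (ne_of_gt hd0)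
      linear_combination hkey - (m + 1) * hA - (p : ℤ) * A * hB + A * B * hd
    have hApos : 0 < A := pos_of_mul_pos' hppos (by rw [← hA]; omega)
    have hBpos : 0 < B := pos_of_mul_pos' hqpos (by rw [← hB]; omega)
    obtain ⟨a, b, ha0, hb0, haa, hbb⟩ :=
      split_sq ((hco.of_isCoprime_of_dvd_left ⟨(p : ℤ), by rw [hA, mul_comm]⟩).of_isCoprime_of_dvd_right
        ⟨(q : ℤ), by rw [hB, mul_comm]⟩) heq hApos hBpos
    have hma : m = (p : ℤ) * a ^ 2 := by rw [hA, haa]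
    have hmb : m + 1 = (q : ℤ) * b ^ 2 := by rw [hB, hbb]
    have heq2 : (q : ℤ) * b ^ 2 = (p : ℤ) * a ^ 2 + 1 := by linear_combination hma - hmb
    have hcast : ((q : ℕ) : ZMod p) * ((b : ℤ) : ZMod p) ^ 2 = 1 := by
      have h := congrArg (fun t : ℤ => (t : ZMod p)) heq2
      push_cast at h
      rwa [ZMod.natCast_self, zero_mul, zero_add] at h
    have hq0 : (((q : ℕ) : ℤ) : ZMod p) ≠ 0 := by
      have h := ZMod.prime_ne_zero p q hpq
      exact_mod_cast h
    have hl1 : legendreSym p (q : ℤ) = 1 := by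
      apply legendreSym.eq_one_of_sq_sub_mul_sq_eq_zero' hq0
        (x := 1) (y := ((b : ℤ) : ZMod p)) one_ne_zero
      rw [one_pow]; push_cast; rw [hcast, sub_self]
    have hrec := legendreSym.quadratic_reciprocity_one_mod_four hp hq2
    rw [hleg, hl1] at hrec
    norm_num at hrec
  · -- q ∣ m, p ∣ m + 1
    exfalso
    obtain ⟨A, hA⟩ := hqm
    obtain ⟨B, hB⟩ := hpm
    have heq : A * B = z ^ 2 := by
      apply mul_left_cancel₀ (ne_of_gt hd0)
      linear_combination hkey - (m + 1) * hA - (q : ℤ) * A * hB + A * B * hd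
    have hApos : 0 < A := pos_of_mul_pos' hqpos (by rw [← hA]; omega)
    have hBpos : 0 < B := pos_of_mul_pos' hppos (by rw [← hB]; omega)
    obtain ⟨a, b, ha0, hb0, haa, hbb⟩ :=
      split_sq ((hco.of_isCoprime_of_dvd_left ⟨(q : ℤ), by rw [hA, mul_comm]⟩).of_isCoprime_of_dvd_right
        ⟨(p : ℤ), by rw [hB, mul_comm]⟩) heq hApos hBpos
    have hma : m = (q : ℤ) * a ^ 2 := by rw [hA, haa]
    have hmb : m + 1 = (p : ℤ) * b ^ 2 := by rw [hB, hbb]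
    have heq2 : (p : ℤ) * b ^ 2 = (q : ℤ) * a ^ 2 + 1 := by linear_combination hma - hmb
    have hcast : ((p : ℕ) : ZMod q) * ((b : ℤ) : ZMod q) ^ 2 = 1 := by
      have h := congrArg (fun t : ℤ => (t : ZMod q)) heq2
      push_cast at h
      rwa [ZMod.natCast_self, zero_mul, zero_add] at h
    have hp0 : (((p : ℕ) : ℤ) : ZMod q) ≠ 0 := by
      have h := ZMod.prime_ne_zero q p (Ne.symm hpq)
      exact_mod_cast h
    have hl1 : legendreSym q (p : ℤ) = 1 := by
      apply legendreSym.eq_one_of_sq_sub_mul_sq_eq_zero' hp0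
        (x := 1) (y := ((b : ℤ) : ZMod q)) one_ne_zero
      rw [one_pow]; push_cast; rw [hcast, sub_self]
    rw [hleg] at hl1
    norm_num at hl1
  · -- p ∣ m + 1, q ∣ m + 1 : the good case
    obtain ⟨B, hB⟩ : d ∣ m + 1 := hd ▸ hcopq.mul_dvd hpm hqm
    have heq : m * B = z ^ 2 := by
      apply mul_left_cancel₀ (ne_of_gt hd0)
      linear_combination hkey - m * hB
    have hBpos : 0 < B := pos_of_mul_pos' hd0 (by rw [← hB]; omega)
    obtain ⟨a, b, ha0, hb0, haa, hbb⟩ :=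
      split_sq (hco.of_isCoprime_of_dvd_right ⟨d, by rw [hB, mul_comm]⟩) heq (by omega) hBpos
    refine ⟨a, b, ?_⟩
    have hmb : m + 1 = d * b ^ 2 := by rw [hB, hbb]
    linear_combination hmb - haa
end

section
/- Let p, q, r be distinct prime numbers with p ≡ 3 (mod 4), q ≡ 1 (mod 8), r ≡ 1 (mod 8), and Legendre symbol (q/r) = −1. Suppose z and t are integers with z > 0 satisfying z² − pqr·t² = 1. Then there exist an integer m and ε ∈ {1, p, qr, pqr} such that either z + 1 = ε·m² or z + 1 = 2·ε·m². -/
private lemma sq_transfer {F : Type*} [Field F] {u x s : F} (hs : s ≠ 0) (hsq : IsSquare s)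
    (h : u * x ^ 2 = s) : IsSquare u := by
  have hx : x ≠ 0 := by
    rintro rfl
    apply hs
    simpa using h.symm
  obtain ⟨v, hv⟩ := hsq
  refine ⟨v / x, ?_⟩
  field_simp
  linear_combination h + hv

private lemma no_sq_sol (ℓ u : ℕ) [Fact ℓ.Prime] (hℓ8 : ℓ % 8 = 1)
    (hnot : ¬ IsSquare ((u : ZMod ℓ))) (c : ℤ) (hc : c = 1 ∨ c = 2)
    (x : ZMod ℓ) (h : (u : ZMod ℓ) * x ^ 2 = (c : ZMod ℓ) ∨ (u : ZMod ℓ) * x ^ 2 = -(c : ZMod ℓ)) :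
    False := by
  have hℓ2 : ℓ ≠ 2 := by rintro rfl; norm_num at hℓ8
  have hc0 : (c : ZMod ℓ) ≠ 0 := by
    rcases hc with rfl | rfl
    · push_cast
      exact one_ne_zero
    · push_cast
      intro h0
      have h2 : ℓ ∣ 2 := by
        have : ((2 : ℕ) : ZMod ℓ) = 0 := by exact_mod_cast h0
        exact (ZMod.natCast_eq_zero_iff 2 ℓ).mp this
      exact hℓ2 ((Nat.prime_dvd_prime_iff_eq Fact.out Nat.prime_two).mp h2)
  have hsq : IsSquare ((c : ZMod ℓ)) := by
    rcases hc with rfl | rfl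
    · push_cast; exact IsSquare.one
    · push_cast
      exact (ZMod.exists_sq_eq_two_iff hℓ2).mpr (Or.inl hℓ8)
  have hm1 : IsSquare (-1 : ZMod ℓ) := ZMod.exists_sq_eq_neg_one_iff.mpr (by omega)
  have hsqm : IsSquare (-(c : ZMod ℓ)) := by
    have := hm1.mul hsq
    simpa using this
  rcases h with h | h
  · exact hnot (sq_transfer hc0 hsq h)
  · exact hnot (sq_transfer (neg_ne_zero.mpr hc0) hsqm h)

private lemma split_two {ε ε' U V T : ℤ} (hε : 0 < ε) (hε' : 0 < ε')
    (hU : 0 < U) (hV : 0 < V) (hco : IsCoprime U V)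
    (hdU : ε ∣ U) (hdV : ε' ∣ V) (h : U * V = ε * ε' * T ^ 2) :
    ∃ a b : ℤ, U = ε * a ^ 2 ∧ V = ε' * b ^ 2 := by
  obtain ⟨U₁, rfl⟩ := hdU
  obtain ⟨V₁, rfl⟩ := hdV
  have hne : ε * ε' ≠ 0 := by positivity
  have hUV : U₁ * V₁ = T ^ 2 := by
    apply mul_left_cancel₀ hne
    linear_combination h
  have hco₁ : IsCoprime U₁ V₁ :=
    (hco.of_isCoprime_of_dvd_left (Dvd.intro_left ε rfl)).of_isCoprime_of_dvd_right
      (Dvd.intro_left ε' rfl)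
  obtain ⟨a, ha⟩ := Int.sq_of_isCoprime hco₁ hUV
  obtain ⟨b, hb⟩ := Int.sq_of_isCoprime hco₁.symm (by rw [mul_comm]; exact hUV)
  rcases ha with ha | ha
  · rcases hb with hb | hb
    · exact ⟨a, b, by rw [ha], by rw [hb]⟩
    · exfalso; rw [hb] at hV; nlinarith [sq_nonneg b]
  · exfalso; rw [ha] at hU; nlinarith [sq_nonneg a]

private lemma decomp (p q r : ℕ) [hP : Fact p.Prime] [hQ : Fact q.Prime] [hR : Fact r.Prime]
    (hpq : p ≠ q) (hpr : p ≠ r) (hqr : q ≠ r)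
    {U V T : ℤ} (hU : 0 < U) (hV : 0 < V) (hco : IsCoprime U V)
    (h : U * V = (p : ℤ) * q * r * T ^ 2) :
    ∃ a b : ℤ,
      (U = a ^ 2 ∧ V = (p : ℤ) * q * r * b ^ 2) ∨
      (U = (p : ℤ) * a ^ 2 ∧ V = (q : ℤ) * r * b ^ 2) ∨
      (U = (q : ℤ) * a ^ 2 ∧ V = (p : ℤ) * r * b ^ 2) ∨
      (U = (r : ℤ) * a ^ 2 ∧ V = (p : ℤ) * q * b ^ 2) ∨
      (U = (p : ℤ) * q * a ^ 2 ∧ V = (r : ℤ) * b ^ 2) ∨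
      (U = (p : ℤ) * r * a ^ 2 ∧ V = (q : ℤ) * b ^ 2) ∨
      (U = (q : ℤ) * r * a ^ 2 ∧ V = (p : ℤ) * b ^ 2) ∨
      (U = (p : ℤ) * q * r * a ^ 2 ∧ V = b ^ 2) := by
  have hp0 : (0 : ℤ) < p := Int.natCast_pos.mpr hP.out.pos
  have hq0 : (0 : ℤ) < q := Int.natCast_pos.mpr hQ.out.pos
  have hr0 : (0 : ℤ) < r := Int.natCast_pos.mpr hR.out.pos
  have hPp : Prime ((p : ℤ)) := Nat.prime_iff_prime_int.mp hP.out
  have hQp : Prime ((q : ℤ)) := Nat.prime_iff_prime_int.mp hQ.out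
  have hRp : Prime ((r : ℤ)) := Nat.prime_iff_prime_int.mp hR.out
  have cpq : IsCoprime ((p : ℤ)) ((q : ℤ)) :=
    Nat.isCoprime_iff_coprime.mpr ((Nat.coprime_primes hP.out hQ.out).mpr hpq)
  have cpr : IsCoprime ((p : ℤ)) ((r : ℤ)) :=
    Nat.isCoprime_iff_coprime.mpr ((Nat.coprime_primes hP.out hR.out).mpr hpr)
  have cqr : IsCoprime ((q : ℤ)) ((r : ℤ)) :=
    Nat.isCoprime_iff_coprime.mpr ((Nat.coprime_primes hQ.out hR.out).mpr hqr)
  have hpdvd : (p : ℤ) ∣ U * V := ⟨(q : ℤ) * r * T ^ 2, by linear_combination h⟩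
  have hqdvd : (q : ℤ) ∣ U * V := ⟨(p : ℤ) * r * T ^ 2, by linear_combination h⟩
  have hrdvd : (r : ℤ) ∣ U * V := ⟨(p : ℤ) * q * T ^ 2, by linear_combination h⟩
  rcases hPp.dvd_or_dvd hpdvd with hpU | hpV <;>
  rcases hQp.dvd_or_dvd hqdvd with hqU | hqV <;>
  rcases hRp.dvd_or_dvd hrdvd with hrU | hrV
  · obtain ⟨a, b, ha, hb⟩ := split_two (ε := (p : ℤ) * q * r) (ε' := 1) (T := T) (by positivity) one_pos hU hV hco
      ((cpr.mul_left cqr).mul_dvd (cpq.mul_dvd hpU hqU) hrU) (one_dvd V)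
      (by linear_combination h)
    exact ⟨a, b, Or.inr <| Or.inr <| Or.inr <| Or.inr <| Or.inr <| Or.inr <| Or.inr
      ⟨ha, by linear_combination hb⟩⟩
  · obtain ⟨a, b, ha, hb⟩ := split_two (ε := (p : ℤ) * q) (ε' := (r : ℤ)) (T := T) (by positivity) hr0 hU hV hco
      (cpq.mul_dvd hpU hqU) hrV (by linear_combination h)
    exact ⟨a, b, Or.inr <| Or.inr <| Or.inr <| Or.inr <| Or.inl ⟨ha, hb⟩⟩
  · obtain ⟨a, b, ha, hb⟩ := split_two (ε := (p : ℤ) * r) (ε' := (q : ℤ)) (T := T) (by positivity) hq0 hU hV hco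
      (cpr.mul_dvd hpU hrU) hqV (by linear_combination h)
    exact ⟨a, b, Or.inr <| Or.inr <| Or.inr <| Or.inr <| Or.inr <| Or.inl ⟨ha, hb⟩⟩
  · obtain ⟨a, b, ha, hb⟩ := split_two (ε := (p : ℤ)) (ε' := (q : ℤ) * r) (T := T) hp0 (by positivity) hU hV hco
      hpU (cqr.mul_dvd hqV hrV) (by linear_combination h)
    exact ⟨a, b, Or.inr <| Or.inl ⟨ha, hb⟩⟩
  · obtain ⟨a, b, ha, hb⟩ := split_two (ε := (q : ℤ) * r) (ε' := (p : ℤ)) (T := T) (by positivity) hp0 hU hV hco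
      (cqr.mul_dvd hqU hrU) hpV (by linear_combination h)
    exact ⟨a, b, Or.inr <| Or.inr <| Or.inr <| Or.inr <| Or.inr <| Or.inr <| Or.inl ⟨ha, hb⟩⟩
  · obtain ⟨a, b, ha, hb⟩ := split_two (ε := (q : ℤ)) (ε' := (p : ℤ) * r) (T := T) hq0 (by positivity) hU hV hco
      hqU (cpr.mul_dvd hpV hrV) (by linear_combination h)
    exact ⟨a, b, Or.inr <| Or.inr <| Or.inl ⟨ha, hb⟩⟩
  · obtain ⟨a, b, ha, hb⟩ := split_two (ε := (r : ℤ)) (ε' := (p : ℤ) * q) (T := T) hr0 (by positivity) hU hV hco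
      hrU (cpq.mul_dvd hpV hqV) (by linear_combination h)
    exact ⟨a, b, Or.inr <| Or.inr <| Or.inr <| Or.inl ⟨ha, hb⟩⟩
  · obtain ⟨a, b, ha, hb⟩ := split_two (ε := 1) (ε' := (p : ℤ) * q * r) (T := T) one_pos (by positivity) hU hV hco
      (one_dvd U) ((cpr.mul_left cqr).mul_dvd (cpq.mul_dvd hpV hqV) hrV)
      (by linear_combination h)
    exact ⟨a, b, Or.inl ⟨by linear_combination ha, hb⟩⟩

theorem norm_one_unit_square_class (p q r : ℕ)
    [Fact p.Prime] [Fact q.Prime] [Fact r.Prime]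
    (hpq : p ≠ q) (hpr : p ≠ r) (hqr : q ≠ r)
    (hp : p % 4 = 3) (hq : q % 8 = 1) (hr : r % 8 = 1)
    (hleg : legendreSym r (q : ℤ) = -1)
    (z t : ℤ) (hz : 0 < z) (hpell : z ^ 2 - (p : ℤ) * q * r * t ^ 2 = 1) :
    ∃ m : ℤ, ∃ ε ∈ ({1, (p : ℤ), (q : ℤ) * r, (p : ℤ) * q * r} : Set ℤ),
      z + 1 = ε * m ^ 2 ∨ z + 1 = 2 * ε * m ^ 2 := by
  -- quadratic residue facts
  have hq2 : q ≠ 2 := by rintro rfl; norm_num at hq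
  have hr4 : r % 4 = 1 := by omega
  have hQR : ¬ IsSquare ((q : ZMod r)) := by
    have := (legendreSym.eq_neg_one_iff r).mp hleg
    push_cast at this
    exact this
  have hRQ : ¬ IsSquare ((r : ZMod q)) := by
    have hrec := legendreSym.quadratic_reciprocity_one_mod_four (p := r) (q := q) hr4 hq2
    have hlegqr : legendreSym q ((r : ℤ)) = -1 := by rw [hrec]; exact hleg
    have := (legendreSym.eq_neg_one_iff q).mp hlegqr
    push_cast at this
    exact this
  -- trivial case z = 1
  by_cases hz1 : z = 1
  · subst hz1
    exact ⟨1, 1, Set.mem_insert 1 _, Or.inr (by norm_num)⟩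
  have hz2 : 2 ≤ z := by omega
  rcases Int.even_or_odd z with ⟨k, hk⟩ | ⟨k, rfl⟩
  · -- z even : z + 1 and z - 1 coprime
    have hco : IsCoprime (z + 1) (z - 1) := ⟨1 - k, k, by linear_combination hk⟩
    have hUV : (z + 1) * (z - 1) = (p : ℤ) * q * r * t ^ 2 := by linear_combination hpell
    obtain ⟨a, b, hcase⟩ := decomp p q r hpq hpr hqr (by omega) (by omega) hco hUV
    rcases hcase with ⟨ha, hb⟩ | ⟨ha, hb⟩ | ⟨ha, hb⟩ | ⟨ha, hb⟩ | ⟨ha, hb⟩ | ⟨ha, hb⟩ |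
      ⟨ha, hb⟩ | ⟨ha, hb⟩
    · exact ⟨a, 1, Set.mem_insert 1 _, Or.inl (by linear_combination ha)⟩
    · exact ⟨a, (p : ℤ), by simp, Or.inl ha⟩
    · -- z + 1 = q a², z - 1 = p r b² : impossible mod r
      exfalso
      have heq : (q : ℤ) * a ^ 2 - (p : ℤ) * r * b ^ 2 = 2 := by linear_combination hb - ha
      have h2 := congrArg (fun n : ℤ => (n : ZMod r)) heq
      push_cast at h2
      rw [ZMod.natCast_self] at h2
      exact no_sq_sol r q hr hQR 2 (Or.inr rfl) ((a : ℤ) : ZMod r)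
        (Or.inl (by push_cast; linear_combination h2))
    · -- z + 1 = r a², z - 1 = p q b² : impossible mod q
      exfalso
      have heq : (r : ℤ) * a ^ 2 - (p : ℤ) * q * b ^ 2 = 2 := by linear_combination hb - ha
      have h2 := congrArg (fun n : ℤ => (n : ZMod q)) heq
      push_cast at h2
      rw [ZMod.natCast_self] at h2
      exact no_sq_sol q r hq hRQ 2 (Or.inr rfl) ((a : ℤ) : ZMod q)
        (Or.inl (by push_cast; linear_combination h2))
    · -- z + 1 = p q a², z - 1 = r b² : impossible mod q
      exfalso
      have heq : (p : ℤ) * q * a ^ 2 - (r : ℤ) * b ^ 2 = 2 := by linear_combination hb - ha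
      have h2 := congrArg (fun n : ℤ => (n : ZMod q)) heq
      push_cast at h2
      rw [ZMod.natCast_self] at h2
      exact no_sq_sol q r hq hRQ 2 (Or.inr rfl) ((b : ℤ) : ZMod q)
        (Or.inr (by push_cast; linear_combination -h2))
    · -- z + 1 = p r a², z - 1 = q b² : impossible mod r
      exfalso
      have heq : (p : ℤ) * r * a ^ 2 - (q : ℤ) * b ^ 2 = 2 := by linear_combination hb - ha
      have h2 := congrArg (fun n : ℤ => (n : ZMod r)) heq
      push_cast at h2
      rw [ZMod.natCast_self] at h2
      exact no_sq_sol r q hr hQR 2 (Or.inr rfl) ((b : ℤ) : ZMod r)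
        (Or.inr (by push_cast; linear_combination -h2))
    · exact ⟨a, (q : ℤ) * r, by simp, Or.inl ha⟩
    · exact ⟨a, (p : ℤ) * q * r, by simp, Or.inl ha⟩
  · -- z odd, z = 2k+1
    have hk1 : 1 ≤ k := by omega
    rcases Int.even_or_odd t with ⟨s, rfl⟩ | ⟨s, rfl⟩
    swap
    · -- t odd : impossible by parity
      exfalso
      have hodd : Odd ((p : ℤ) * q * r * (2 * s + 1) ^ 2) := by
        have hop : Odd ((p : ℤ)) := by rw [Int.odd_coe_nat]; rw [Nat.odd_iff]; omega
        have hoq : Odd ((q : ℤ)) := by rw [Int.odd_coe_nat]; rw [Nat.odd_iff]; omega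
        have hor : Odd ((r : ℤ)) := by rw [Int.odd_coe_nat]; rw [Nat.odd_iff]; omega
        exact ((hop.mul hoq).mul hor).mul (Odd.pow ⟨s, by ring⟩)
      have heq : (p : ℤ) * q * r * (2 * s + 1) ^ 2 = 4 * k ^ 2 + 4 * k := by
        linear_combination -hpell
      rw [heq] at hodd
      obtain ⟨m, hm⟩ := hodd
      have hK : k ^ 2 = k * k := sq k
      rw [hK] at hm
      obtain ⟨j, hj⟩ : ∃ j, k * k = j := ⟨_, rfl⟩
      rw [hj] at hm
      omega
    · -- t = 2s
      have hco : IsCoprime (k + 1) k := ⟨1, -1, by ring⟩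
      have hUV : (k + 1) * k = (p : ℤ) * q * r * s ^ 2 := by
        apply mul_left_cancel₀ (a := (4 : ℤ)) (by norm_num)
        linear_combination hpell
      obtain ⟨a, b, hcase⟩ := decomp p q r hpq hpr hqr (by omega) (by omega) hco hUV
      rcases hcase with ⟨ha, hb⟩ | ⟨ha, hb⟩ | ⟨ha, hb⟩ | ⟨ha, hb⟩ | ⟨ha, hb⟩ | ⟨ha, hb⟩ |
        ⟨ha, hb⟩ | ⟨ha, hb⟩
      · exact ⟨a, 1, Set.mem_insert 1 _, Or.inr (by linear_combination 2 * ha)⟩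
      · exact ⟨a, (p : ℤ), by simp, Or.inr (by linear_combination 2 * ha)⟩
      · exfalso
        have heq : (q : ℤ) * a ^ 2 - (p : ℤ) * r * b ^ 2 = 1 := by linear_combination hb - ha
        have h2 := congrArg (fun n : ℤ => (n : ZMod r)) heq
        push_cast at h2
        rw [ZMod.natCast_self] at h2
        exact no_sq_sol r q hr hQR 1 (Or.inl rfl) ((a : ℤ) : ZMod r)
          (Or.inl (by push_cast; linear_combination h2))
      · exfalso
        have heq : (r : ℤ) * a ^ 2 - (p : ℤ) * q * b ^ 2 = 1 := by linear_combination hb - ha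
        have h2 := congrArg (fun n : ℤ => (n : ZMod q)) heq
        push_cast at h2
        rw [ZMod.natCast_self] at h2
        exact no_sq_sol q r hq hRQ 1 (Or.inl rfl) ((a : ℤ) : ZMod q)
          (Or.inl (by push_cast; linear_combination h2))
      · exfalso
        have heq : (p : ℤ) * q * a ^ 2 - (r : ℤ) * b ^ 2 = 1 := by linear_combination hb - ha
        have h2 := congrArg (fun n : ℤ => (n : ZMod q)) heq
        push_cast at h2
        rw [ZMod.natCast_self] at h2
        exact no_sq_sol q r hq hRQ 1 (Or.inl rfl) ((b : ℤ) : ZMod q)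
          (Or.inr (by push_cast; linear_combination -h2))
      · exfalso
        have heq : (p : ℤ) * r * a ^ 2 - (q : ℤ) * b ^ 2 = 1 := by linear_combination hb - ha
        have h2 := congrArg (fun n : ℤ => (n : ZMod r)) heq
        push_cast at h2
        rw [ZMod.natCast_self] at h2
        exact no_sq_sol r q hr hQR 1 (Or.inl rfl) ((b : ℤ) : ZMod r)
          (Or.inr (by push_cast; linear_combination -h2))
      · exact ⟨a, (q : ℤ) * r, by simp, Or.inr (by linear_combination 2 * ha)⟩
      · exact ⟨a, (p : ℤ) * q * r, by simp, Or.inr (by linear_combination 2 * ha)⟩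
end

section
/- Let p, q, r be distinct prime numbers with p ≡ 3 (mod 4), q ≡ 3 (mod 4), r ≡ 1 (mod 8), Legendre symbol (p/r) = 1 and Legendre symbol (q/r) = −1. Suppose z and t are integers with z > 0 satisfying z² − pqr·t² = 4. Then there exist an integer m and ε ∈ {1, p, qr, pqr} such that z + 2 = ε·m², or z + 2 = 2·ε·m², or z + 2 = 4·ε·m². -/
private lemma sf_dvd_iff {a b X ℓ : ℕ} (hℓ : ℓ.Prime) (ha : Squarefree a)
    (hX : b ^ 2 * a = X) (hX0 : X ≠ 0) : ℓ ∣ a ↔ Odd (X.factorization ℓ) := by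
  have ha0 : a ≠ 0 := ha.ne_zero
  have hb0 : b ≠ 0 := by rintro rfl; simp at hX; omega
  subst hX
  have hfact : (b ^ 2 * a).factorization ℓ = 2 * b.factorization ℓ + a.factorization ℓ := by
    rw [Nat.factorization_mul (pow_ne_zero _ hb0) ha0, Nat.factorization_pow]
    simp
  have h1 : a.factorization ℓ ≤ 1 := ha.natFactorization_le_one ℓ
  rw [hfact, Nat.odd_iff]
  constructor
  · intro h
    have h2 : 0 < a.factorization ℓ := hℓ.factorization_pos_of_dvd ha0 h
    omega
  · intro h
    have h2 : a.factorization ℓ ≠ 0 := by omega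
    exact Nat.dvd_of_factorization_pos h2

private lemma prime_dvd_quad {ℓ a b c d A B C D : ℕ} (hℓ : ℓ.Prime)
    (ha : a ∣ A) (hb : b ∣ B) (hc : c ∣ C) (hd : d ∣ D)
    (hA : ¬ ℓ ∣ A) (hB : ¬ ℓ ∣ B) (hC : ¬ ℓ ∣ C) (hD : ¬ ℓ ∣ D) :
    ¬ ℓ ∣ a * (b * (c * d)) := by
  intro h
  have h2 := h.trans (mul_dvd_mul ha (mul_dvd_mul hb (mul_dvd_mul hc hd)))
  rcases hℓ.dvd_mul.mp h2 with h3 | h3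
  · exact hA h3
  rcases hℓ.dvd_mul.mp h3 with h4 | h4
  · exact hB h4
  rcases hℓ.dvd_mul.mp h4 with h5 | h5
  exacts [hC h5, hD h5]

private lemma sq_mod4_even {n : ℕ} (h : Even n) : n ^ 2 % 4 = 0 := by
  obtain ⟨u, rfl⟩ := h
  have : (u + u) ^ 2 = 4 * u ^ 2 := by ring
  omega

private lemma sq_mod4_odd {n : ℕ} (h : Odd n) : n ^ 2 % 4 = 1 := by
  obtain ⟨u, rfl⟩ := h
  have : (2 * u + 1) ^ 2 = 4 * (u ^ 2 + u) + 1 := by ring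
  omega

private lemma mod4_contradiction {x y m n : ℕ} (hx : x % 4 = 1) (hy : y % 4 = 1)
    (h : x * m ^ 2 = y * n ^ 2 + 2) : False := by
  have hm : m ^ 2 % 4 = 0 ∨ m ^ 2 % 4 = 1 := by
    rcases Nat.even_or_odd m with h' | h'
    · exact Or.inl (sq_mod4_even h')
    · exact Or.inr (sq_mod4_odd h')
  have hn : n ^ 2 % 4 = 0 ∨ n ^ 2 % 4 = 1 := by
    rcases Nat.even_or_odd n with h' | h'
    · exact Or.inl (sq_mod4_even h')
    · exact Or.inr (sq_mod4_odd h')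
  have h1 : (x * m ^ 2) % 4 = (x % 4 * (m ^ 2 % 4)) % 4 := Nat.mul_mod _ _ _
  have h2 : (y * n ^ 2) % 4 = (y % 4 * (n ^ 2 % 4)) % 4 := Nat.mul_mod _ _ _
  rw [hx] at h1
  rw [hy] at h2
  omega

theorem norm_one_unit_square_class' (p q r : ℕ)
    [Fact p.Prime] [Fact q.Prime] [Fact r.Prime]
    (hpq : p ≠ q) (hpr : p ≠ r) (hqr : q ≠ r)
    (hp : p % 4 = 3) (hq : q % 4 = 3) (hr : r % 8 = 1)
    (hlegp : legendreSym r (p : ℤ) = 1) (hlegq : legendreSym r (q : ℤ) = -1)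
    (z t : ℤ) (hz : 0 < z) (hpell : z ^ 2 - (p : ℤ) * q * r * t ^ 2 = 4) :
    ∃ m : ℤ, ∃ ε ∈ ({1, (p : ℤ), (q : ℤ) * r, (p : ℤ) * q * r} : Set ℤ),
      z + 2 = ε * m ^ 2 ∨ z + 2 = 2 * ε * m ^ 2 ∨ z + 2 = 4 * ε * m ^ 2 := by
  have hp' : p.Prime := Fact.out
  have hq' : q.Prime := Fact.out
  have hr' : r.Prime := Fact.out
  have hp2 : p ≠ 2 := by rintro rfl; omega
  have hq2 : q ≠ 2 := by rintro rfl; omega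
  have hr2 : r ≠ 2 := by rintro rfl; omega
  -- pairwise non-divisibility facts
  have ndpq : ¬ p ∣ q := fun h => hpq ((Nat.prime_dvd_prime_iff_eq hp' hq').mp h)
  have ndqp : ¬ q ∣ p := fun h => hpq ((Nat.prime_dvd_prime_iff_eq hq' hp').mp h).symm
  have ndpr : ¬ p ∣ r := fun h => hpr ((Nat.prime_dvd_prime_iff_eq hp' hr').mp h)
  have ndrp : ¬ r ∣ p := fun h => hpr ((Nat.prime_dvd_prime_iff_eq hr' hp').mp h).symm
  have ndqr : ¬ q ∣ r := fun h => hqr ((Nat.prime_dvd_prime_iff_eq hq' hr').mp h)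
  have ndrq : ¬ r ∣ q := fun h => hqr ((Nat.prime_dvd_prime_iff_eq hr' hq').mp h).symm
  have ndp2 : ¬ p ∣ 2 := fun h => hp2 ((Nat.prime_dvd_prime_iff_eq hp' Nat.prime_two).mp h)
  have ndq2 : ¬ q ∣ 2 := fun h => hq2 ((Nat.prime_dvd_prime_iff_eq hq' Nat.prime_two).mp h)
  have ndr2 : ¬ r ∣ 2 := fun h => hr2 ((Nat.prime_dvd_prime_iff_eq hr' Nat.prime_two).mp h)
  have nd2p : ¬ 2 ∣ p := fun h => hp2 ((Nat.prime_dvd_prime_iff_eq Nat.prime_two hp').mp h).symm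
  have nd2q : ¬ 2 ∣ q := fun h => hq2 ((Nat.prime_dvd_prime_iff_eq Nat.prime_two hq').mp h).symm
  have nd2r : ¬ 2 ∣ r := fun h => hr2 ((Nat.prime_dvd_prime_iff_eq Nat.prime_two hr').mp h).symm
  have ndp1 : ¬ p ∣ 1 := fun h => hp'.ne_one (Nat.dvd_one.mp h)
  have ndq1 : ¬ q ∣ 1 := fun h => hq'.ne_one (Nat.dvd_one.mp h)
  have ndr1 : ¬ r ∣ 1 := fun h => hr'.ne_one (Nat.dvd_one.mp h)
  have nd21 : ¬ 2 ∣ 1 := by norm_num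
  -- trivial case t = 0
  rcases eq_or_ne t 0 with rfl | ht
  · have hz2 : z = 2 := by nlinarith [sq_nonneg (z - 2), sq_nonneg (z + 2)]
    refine ⟨2, 1, Set.mem_insert _ _, Or.inl ?_⟩
    rw [hz2]; norm_num
  have hP : (0:ℤ) < (p:ℤ) * q * r * t ^ 2 := by
    have h1 : (0:ℤ) < (p:ℤ) := by exact_mod_cast hp'.pos
    have h2 : (0:ℤ) < (q:ℤ) := by exact_mod_cast hq'.pos
    have h3 : (0:ℤ) < (r:ℤ) := by exact_mod_cast hr'.pos
    have h4 : (0:ℤ) < t ^ 2 := by positivity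
    positivity
  have hz3 : 3 ≤ z := by nlinarith [sq_nonneg (z - 2)]
  set N := (z + 2).toNat with hNdef
  set M := (z - 2).toNat with hMdef
  set T := t.natAbs with hTdef
  have hNcast : (N : ℤ) = z + 2 := Int.toNat_of_nonneg (by omega)
  have hMcast : (M : ℤ) = z - 2 := Int.toNat_of_nonneg (by omega)
  have hN0 : N ≠ 0 := by omega
  have hM0 : M ≠ 0 := by omega
  have hT0 : T ≠ 0 := Int.natAbs_ne_zero.mpr ht
  have hNM4 : N = M + 4 := by omega
  have hprod : N * M = p * q * r * T ^ 2 := by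
    have hcast : ((N * M : ℕ) : ℤ) = ((p * q * r * T ^ 2 : ℕ) : ℤ) := by
      push_cast
      rw [hNcast, hMcast, Int.natCast_natAbs, sq_abs]
      linear_combination hpell
    exact_mod_cast hcast
  -- factorization facts
  have hpqr0 : p * q * r ≠ 0 := by
    have := hp'.pos; have := hq'.pos; have := hr'.pos; positivity
  have hfac : ∀ ℓ : ℕ, N.factorization ℓ + M.factorization ℓ
      = (p * q * r).factorization ℓ + 2 * T.factorization ℓ := by
    intro ℓ
    have h1 : (N * M).factorization = (p * q * r).factorization + (T ^ 2).factorization := by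
      rw [hprod, Nat.factorization_mul hpqr0 (pow_ne_zero _ hT0)]
    rw [Nat.factorization_mul hN0 hM0, Nat.factorization_pow] at h1
    have h2 := DFunLike.congr_fun h1 ℓ
    simpa using h2
  have hfsplit : ∀ ℓ : ℕ, (p * q * r).factorization ℓ
      = p.factorization ℓ + q.factorization ℓ + r.factorization ℓ := by
    intro ℓ
    rw [Nat.factorization_mul (mul_ne_zero hp'.pos.ne' hq'.pos.ne') hr'.pos.ne',
      Nat.factorization_mul hp'.pos.ne' hq'.pos.ne']
    simp
  have hfp : (p * q * r).factorization p = 1 := by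
    rw [hfsplit, hp'.factorization_self, Nat.factorization_eq_zero_of_not_dvd ndpq,
      Nat.factorization_eq_zero_of_not_dvd ndpr]
  have hfq : (p * q * r).factorization q = 1 := by
    rw [hfsplit, hq'.factorization_self, Nat.factorization_eq_zero_of_not_dvd ndqp,
      Nat.factorization_eq_zero_of_not_dvd ndqr]
  have hfr : (p * q * r).factorization r = 1 := by
    rw [hfsplit, hr'.factorization_self, Nat.factorization_eq_zero_of_not_dvd ndrp,
      Nat.factorization_eq_zero_of_not_dvd ndrq]
  have hfother : ∀ ℓ : ℕ, ℓ.Prime → ℓ ≠ p → ℓ ≠ q → ℓ ≠ r →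
      (p * q * r).factorization ℓ = 0 := by
    intro ℓ hℓ h1 h2 h3
    apply Nat.factorization_eq_zero_of_not_dvd
    intro hdvd
    rcases hℓ.dvd_mul.mp hdvd with h4 | h4
    · rcases hℓ.dvd_mul.mp h4 with h5 | h5
      · exact h1 ((Nat.prime_dvd_prime_iff_eq hℓ hp').mp h5)
      · exact h2 ((Nat.prime_dvd_prime_iff_eq hℓ hq').mp h5)
    · exact h3 ((Nat.prime_dvd_prime_iff_eq hℓ hr').mp h4)
  -- squarefree decompositions
  obtain ⟨aN, bN, hNeq, haN⟩ := Nat.sq_mul_squarefree N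
  obtain ⟨aM, bM, hMeq, haM⟩ := Nat.sq_mul_squarefree M
  have haN0 : aN ≠ 0 := haN.ne_zero
  have haM0 : aM ≠ 0 := haM.ne_zero
  have hdvdN : ∀ ℓ : ℕ, ℓ.Prime → (ℓ ∣ aN ↔ Odd (N.factorization ℓ)) :=
    fun ℓ hℓ => sf_dvd_iff hℓ haN hNeq hN0
  have hdvdM : ∀ ℓ : ℕ, ℓ.Prime → (ℓ ∣ aM ↔ Odd (M.factorization ℓ)) :=
    fun ℓ hℓ => sf_dvd_iff hℓ haM hMeq hM0
  have haNdvdN : aN ∣ N := ⟨bN ^ 2, by rw [← hNeq]; ring⟩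
  have haMdvdM : aM ∣ M := ⟨bM ^ 2, by rw [← hMeq]; ring⟩
  have hnotboth : ∀ ℓ : ℕ, ℓ.Prime → ℓ ≠ 2 → ℓ ∣ N → ℓ ∣ M → False := by
    intro ℓ hℓ h2 hdN hdM
    have h4 : ℓ ∣ 4 := by
      have h := Nat.dvd_sub hdN hdM
      have e : N - M = 4 := by omega
      rwa [e] at h
    have h4' : ℓ ∣ 2 ^ 2 := by norm_num; exact h4
    exact h2 ((Nat.prime_dvd_prime_iff_eq hℓ Nat.prime_two).mp (hℓ.dvd_of_dvd_pow h4'))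
  have hlink : ∀ ℓ : ℕ, ℓ.Prime → (p * q * r).factorization ℓ = 1 →
      (¬ ℓ ∣ aN → ℓ ∣ aM) ∧ (ℓ ∣ aN → ¬ ℓ ∣ aM) := by
    intro ℓ hℓ h1
    have h := hfac ℓ
    have hdN := hdvdN ℓ hℓ
    have hdM := hdvdM ℓ hℓ
    rw [Nat.odd_iff] at hdN hdM
    constructor
    · intro hx
      have hxN : ¬ N.factorization ℓ % 2 = 1 := fun hc => hx (hdN.mpr hc)
      exact hdM.mpr (by omega)
    · intro hx hy
      have h1' := hdN.mp hx
      have h2' := hdM.mp hy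
      omega
  have hlink2 : (2 ∣ aN ↔ 2 ∣ aM) := by
    have h0 : (p * q * r).factorization 2 = 0 :=
      hfother 2 Nat.prime_two (fun h => hp2 h.symm) (fun h => hq2 h.symm) (fun h => hr2 h.symm)
    have h := hfac 2
    have hdN := hdvdN 2 Nat.prime_two
    have hdM := hdvdM 2 Nat.prime_two
    rw [Nat.odd_iff] at hdN hdM
    rw [hdN, hdM]
    omega
  have hMside : ∀ ℓ : ℕ, ℓ.Prime → (p * q * r).factorization ℓ = 1 → ¬ ℓ ∣ aN → ℓ ∣ M :=
    fun ℓ hℓ h1 hx => ((hlink ℓ hℓ h1).1 hx).trans haMdvdM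
  have hprimefac : ∀ ℓ : ℕ, ℓ.Prime → (ℓ ∣ aN ∨ ℓ ∣ aM) → (ℓ = 2 ∨ ℓ = p ∨ ℓ = q ∨ ℓ = r) := by
    intro ℓ hℓ hcase
    by_contra hcon
    push_neg at hcon
    obtain ⟨h2, hpp, hqq, hrr⟩ := hcon
    have h0 := hfother ℓ hℓ hpp hqq hrr
    have h := hfac ℓ
    have hdN := hdvdN ℓ hℓ
    have hdM := hdvdM ℓ hℓ
    rw [Nat.odd_iff] at hdN hdM
    rcases hcase with hx | hx
    · have h1 := hdN.mp hx
      have h2' : M.factorization ℓ ≠ 0 := by omega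
      exact hnotboth ℓ hℓ h2 (hx.trans haNdvdN) (Nat.dvd_of_factorization_pos h2')
    · have h1 := hdM.mp hx
      have h2' : N.factorization ℓ ≠ 0 := by omega
      exact hnotboth ℓ hℓ h2 (Nat.dvd_of_factorization_pos h2') (hx.trans haMdvdM)
  have htarget0 : 2 * (p * (q * r)) ≠ 0 := by
    have := hp'.pos; have := hq'.pos; have := hr'.pos; positivity
  have hsubdvd : ∀ ℓ : ℕ, (ℓ = 2 ∨ ℓ = p ∨ ℓ = q ∨ ℓ = r) → ℓ ∣ 2 * (p * (q * r)) := by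
    intro ℓ hcase
    rcases hcase with h | h | h | h <;> rw [h]
    · exact dvd_mul_right 2 _
    · exact dvd_mul_of_dvd_right (dvd_mul_right p (q * r)) 2
    · exact dvd_mul_of_dvd_right (dvd_mul_of_dvd_right (dvd_mul_right q r) p) 2
    · exact dvd_mul_of_dvd_right (dvd_mul_of_dvd_right (dvd_mul_left r q) p) 2
  have hsubN : aN ∣ 2 * (p * (q * r)) := by
    rw [← Nat.factorization_le_iff_dvd haN0 htarget0, Finsupp.le_def]
    intro ℓ
    by_cases hℓ : ℓ.Prime
    · by_cases hd : ℓ ∣ aN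
      · have h1 : aN.factorization ℓ ≤ 1 := haN.natFactorization_le_one ℓ
        have h2 : 1 ≤ (2 * (p * (q * r))).factorization ℓ := by
          rw [← hℓ.dvd_iff_one_le_factorization htarget0]
          exact hsubdvd ℓ (hprimefac ℓ hℓ (Or.inl hd))
        omega
      · rw [Nat.factorization_eq_zero_of_not_dvd hd]; exact Nat.zero_le _
    · rw [Nat.factorization_eq_zero_of_not_prime _ hℓ]; exact Nat.zero_le _
  have hsubM : aM ∣ 2 * (p * (q * r)) := by
    rw [← Nat.factorization_le_iff_dvd haM0 htarget0, Finsupp.le_def]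
    intro ℓ
    by_cases hℓ : ℓ.Prime
    · by_cases hd : ℓ ∣ aM
      · have h1 : aM.factorization ℓ ≤ 1 := haM.natFactorization_le_one ℓ
        have h2 : 1 ≤ (2 * (p * (q * r))).factorization ℓ := by
          rw [← hℓ.dvd_iff_one_le_factorization htarget0]
          exact hsubdvd ℓ (hprimefac ℓ hℓ (Or.inr hd))
        omega
      · rw [Nat.factorization_eq_zero_of_not_dvd hd]; exact Nat.zero_le _
    · rw [Nat.factorization_eq_zero_of_not_prime _ hℓ]; exact Nat.zero_le _
  -- peel off the divisors
  obtain ⟨d2, x, hd2, hx, haNeq⟩ := exists_dvd_and_dvd_of_dvd_mul hsubN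
  obtain ⟨dp, y, hdp, hy, hxeq⟩ := exists_dvd_and_dvd_of_dvd_mul hx
  obtain ⟨dq, dr, hdq, hdr, hyeq⟩ := exists_dvd_and_dvd_of_dvd_mul hy
  subst hyeq; subst hxeq
  obtain ⟨d2', x', hd2', hx', haMeq⟩ := exists_dvd_and_dvd_of_dvd_mul hsubM
  obtain ⟨dp', y', hdp', hy', hxMeq⟩ := exists_dvd_and_dvd_of_dvd_mul hx'
  obtain ⟨dq', dr', hdq', hdr', hyMeq⟩ := exists_dvd_and_dvd_of_dvd_mul hy'
  subst hyMeq; subst hxMeq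
  have hNZ : z + 2 = ((bN : ℤ)) ^ 2 * (aN : ℤ) := by
    rw [← hNcast, ← hNeq]; push_cast; ring
  have h2cases := (Nat.dvd_prime Nat.prime_two).mp hd2
  have hpq4 : (p * q) % 4 = 1 := by
    have := Nat.mul_mod p q 4
    rw [hp, hq] at this
    omega
  rcases (Nat.dvd_prime hp').mp hdp with hdpv | hdpv <;>
    rcases (Nat.dvd_prime hq').mp hdq with hdqv | hdqv <;>
    rcases (Nat.dvd_prime hr').mp hdr with hdrv | hdrv <;>
    rw [hdpv, hdqv, hdrv] at haNeq
  -- (1,1,1) : ε = 1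
  · refine ⟨(bN : ℤ), 1, Set.mem_insert _ _, ?_⟩
    have ha : (aN : ℤ) = (d2 : ℤ) := by rw [haNeq]; push_cast; ring
    rcases h2cases with hv | hv <;> rw [hv] at ha
    · left; rw [hNZ, ha]; push_cast; ring
    · right; left; rw [hNZ, ha]; push_cast; ring
  -- (1,1,r) : ε = r, contradiction
  · exfalso
    have hpN' : ¬ p ∣ aN := by
      rw [haNeq]
      exact prime_dvd_quad hp' hd2 (one_dvd 1) (one_dvd 1) (dvd_refl r) ndp2 ndp1 ndp1 ndpr
    have hqN' : ¬ q ∣ aN := by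
      rw [haNeq]
      exact prime_dvd_quad hq' hd2 (one_dvd 1) (one_dvd 1) (dvd_refl r) ndq2 ndq1 ndq1 ndqr
    have hraN : r ∣ aN := by rw [haNeq]; exact ⟨d2, by ring⟩
    have hpaM : p ∣ aM := (hlink p hp' hfp).1 hpN'
    have hqaM : q ∣ aM := (hlink q hq' hfq).1 hqN'
    have hraM : ¬ r ∣ aM := (hlink r hr' hfr).2 hraN
    have hdp'v : dp' = p := by
      rcases (Nat.dvd_prime hp').mp hdp' with hv | hv
      · exfalso
        rw [hv] at haMeq
        refine absurd hpaM ?_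
        rw [haMeq]
        exact prime_dvd_quad hp' hd2' (one_dvd 1) hdq' hdr' ndp2 ndp1 ndpq ndpr
      · exact hv
    rw [hdp'v] at haMeq
    have hdq'v : dq' = q := by
      rcases (Nat.dvd_prime hq').mp hdq' with hv | hv
      · exfalso
        rw [hv] at haMeq
        refine absurd hqaM ?_
        rw [haMeq]
        exact prime_dvd_quad hq' hd2' (dvd_refl p) (one_dvd 1) hdr' ndq2 ndqp ndq1 ndqr
      · exact hv
    rw [hdq'v] at haMeq
    have hdr'v : dr' = 1 := by
      rcases (Nat.dvd_prime hr').mp hdr' with hv | hv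
      · exact hv
      · exfalso
        rw [hv] at haMeq
        exact hraM (by rw [haMeq]; exact ⟨d2' * (p * q), by ring⟩)
    rw [hdr'v] at haMeq
    -- aM = d2' * (p * (q * 1)), aN = d2 * (1 * (1 * r))
    rcases (Nat.dvd_prime Nat.prime_two).mp hd2' with hv | hv
    · -- d2' = 1 : mod q with reciprocity
      rw [hv] at haMeq
      have h2aM : ¬ 2 ∣ aM := by
        rw [haMeq]
        exact prime_dvd_quad Nat.prime_two (dvd_refl 1) (dvd_refl p) (dvd_refl q) (one_dvd 1)
          nd21 nd2p nd2q nd21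
      have h2aN : ¬ 2 ∣ aN := fun h => h2aM (hlink2.mp h)
      have hd2v : d2 = 1 := by
        rcases h2cases with hv2 | hv2
        · exact hv2
        · exfalso
          apply h2aN
          rw [haNeq, hv2]
          exact ⟨1 * (1 * r), rfl⟩
      rw [hd2v] at haNeq
      haveI : NeZero q := ⟨hq'.pos.ne'⟩
      have hqM : q ∣ M := hqaM.trans haMdvdM
      have hM0q : ((M : ℕ) : ZMod q) = 0 := (ZMod.natCast_eq_zero_iff M q).mpr hqM
      have hN4q : ((N : ℕ) : ZMod q) = 4 := by
        rw [hNM4]; push_cast; rw [hM0q]; ring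
      have hbNq : ((bN : ℕ) : ZMod q) ≠ 0 := by
        intro h0
        have hdvd : q ∣ bN := (ZMod.natCast_eq_zero_iff bN q).mp h0
        have hqN2 : q ∣ N := by
          rw [← hNeq]
          exact dvd_mul_of_dvd_left (dvd_pow hdvd two_ne_zero) aN
        exact hnotboth q hq' hq2 hqN2 hqM
      have hEq : ((bN : ZMod q)) ^ 2 * (r : ZMod q) = 4 := by
        rw [← hN4q, ← hNeq, haNeq]; push_cast; ring
      have hrne : ((r : ℤ) : ZMod q) ≠ 0 := by
        have h1 : ((r : ℕ) : ZMod q) ≠ 0 :=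
          fun h0 => ndqr ((ZMod.natCast_eq_zero_iff r q).mp h0)
        intro h0; apply h1; exact_mod_cast h0
      have hsq : IsSquare (((r : ℤ)) : ZMod q) := by
        have hcast : (((r : ℤ)) : ZMod q) = ((r : ℕ) : ZMod q) := by push_cast; rfl
        rw [hcast]
        refine ⟨2 * ((bN : ZMod q))⁻¹, ?_⟩
        field_simp
        linear_combination hEq
      have h1 := (legendreSym.eq_one_iff q hrne).mpr hsq
      have h2 := legendreSym.quadratic_reciprocity_one_mod_four (p := r) (q := q)
        (by omega) hq2
      rw [h2, hlegq] at h1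
      norm_num at h1
    · -- d2' = 2 : parity + mod 4
      rw [hv] at haMeq
      have h2aN : 2 ∣ aN := hlink2.mpr (by rw [haMeq]; exact ⟨p * (q * 1), rfl⟩)
      have hd2v : d2 = 2 := by
        rcases h2cases with hv2 | hv2
        · exfalso
          rw [hv2] at haNeq
          refine absurd h2aN ?_
          rw [haNeq]
          exact prime_dvd_quad Nat.prime_two (dvd_refl 1) (one_dvd 1) (one_dvd 1) (dvd_refl r)
            nd21 nd21 nd21 nd2r
        · exact hv2
      rw [hd2v] at haNeq
      have e1 : N = 2 * (r * bN ^ 2) := by rw [← hNeq, haNeq]; ring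
      have e2 : M = 2 * ((p * q) * bM ^ 2) := by rw [← hMeq, haMeq]; ring
      have heq : r * bN ^ 2 = (p * q) * bM ^ 2 + 2 := by omega
      exact mod4_contradiction (by omega) hpq4 heq
  -- (1,q,1) : ε = q, contradiction
  · exfalso
    haveI : NeZero r := ⟨hr'.pos.ne'⟩
    have hndN : ¬ r ∣ aN := by
      rw [haNeq]
      exact prime_dvd_quad hr' hd2 (one_dvd 1) (dvd_refl q) (one_dvd 1) ndr2 ndr1 ndrq ndr1
    have hrM : r ∣ M := hMside r hr' hfr hndN
    have hM0r : ((M : ℕ) : ZMod r) = 0 := (ZMod.natCast_eq_zero_iff M r).mpr hrM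
    have hN4 : ((N : ℕ) : ZMod r) = 4 := by
      rw [hNM4]; push_cast; rw [hM0r]; ring
    have hbNr : ((bN : ℕ) : ZMod r) ≠ 0 := by
      intro h0
      have hdvd : r ∣ bN := (ZMod.natCast_eq_zero_iff bN r).mp h0
      have hrN : r ∣ N := by
        rw [← hNeq]
        exact dvd_mul_of_dvd_left (dvd_pow hdvd two_ne_zero) aN
      exact hnotboth r hr' hr2 hrN hrM
    have hd2ne : ((d2 : ℕ) : ZMod r) ≠ 0 := by
      intro h0
      exact ndr2 (((ZMod.natCast_eq_zero_iff d2 r).mp h0).trans hd2)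
    obtain ⟨c, hc⟩ : ∃ c : ZMod r, c * c = ((d2 : ℕ) : ZMod r) := by
      rcases h2cases with h | h
      · exact ⟨1, by rw [h]; norm_num⟩
      · obtain ⟨s, hs⟩ := (ZMod.exists_sq_eq_two_iff hr2).mpr (Or.inl hr)
        refine ⟨s, ?_⟩
        rw [h]
        push_cast
        exact hs.symm
    have hcne : c ≠ 0 := fun h0 => hd2ne (by rw [← hc, h0, mul_zero])
    have hEq : ((bN : ZMod r)) ^ 2 * (((d2 : ℕ) : ZMod r) * (q : ZMod r)) = 4 := by
      rw [← hN4, ← hNeq, haNeq]; push_cast; ring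
    have hne0 : (((q : ℤ)) : ZMod r) ≠ 0 := by
      have h1 : ((q : ℕ) : ZMod r) ≠ 0 :=
        fun h0 => ndrq ((ZMod.natCast_eq_zero_iff q r).mp h0)
      intro h0; apply h1; exact_mod_cast h0
    have hsq : IsSquare (((q : ℤ)) : ZMod r) := by
      have hcast : (((q : ℤ)) : ZMod r) = ((q : ℕ) : ZMod r) := by push_cast; rfl
      rw [hcast]
      refine ⟨2 * (c * (bN : ZMod r))⁻¹, ?_⟩
      have hu : c * ((bN : ℕ) : ZMod r) ≠ 0 := mul_ne_zero hcne hbNr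
      field_simp
      linear_combination hEq + ((q : ZMod r)) * ((bN : ZMod r)) ^ 2 * hc
    have h1 := (legendreSym.eq_one_iff r hne0).mpr hsq
    rw [hlegq] at h1
    norm_num at h1
  -- (1,q,r) : ε = qr
  · refine ⟨(bN : ℤ), (q : ℤ) * r,
      Set.mem_insert_iff.mpr (Or.inr (Set.mem_insert_iff.mpr (Or.inr (Set.mem_insert _ _)))), ?_⟩
    have ha : (aN : ℤ) = (d2 : ℤ) * ((q : ℤ) * r) := by rw [haNeq]; push_cast; ring
    rcases h2cases with hv | hv <;> rw [hv] at ha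
    · left; rw [hNZ, ha]; push_cast; ring
    · right; left; rw [hNZ, ha]; push_cast; ring
  -- (p,1,1) : ε = p
  · refine ⟨(bN : ℤ), (p : ℤ), Set.mem_insert_iff.mpr (Or.inr (Set.mem_insert _ _)), ?_⟩
    have ha : (aN : ℤ) = (d2 : ℤ) * (p : ℤ) := by rw [haNeq]; push_cast; ring
    rcases h2cases with hv | hv <;> rw [hv] at ha
    · left; rw [hNZ, ha]; push_cast; ring
    · right; left; rw [hNZ, ha]; push_cast; ring
  -- (p,1,r) : ε = pr, contradiction
  · exfalso
    haveI : NeZero r := ⟨hr'.pos.ne'⟩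
    have hqN' : ¬ q ∣ aN := by
      rw [haNeq]
      exact prime_dvd_quad hq' hd2 (dvd_refl p) (one_dvd 1) (dvd_refl r) ndq2 ndqp ndq1 ndqr
    have hqaM : q ∣ aM := (hlink q hq' hfq).1 hqN'
    have hpaN : p ∣ aN := by rw [haNeq]; exact ⟨d2 * (1 * r), by ring⟩
    have hraN : r ∣ aN := by rw [haNeq]; exact ⟨d2 * p, by ring⟩
    have hpaM : ¬ p ∣ aM := (hlink p hp' hfp).2 hpaN
    have hraM : ¬ r ∣ aM := (hlink r hr' hfr).2 hraN
    have hdp'v : dp' = 1 := by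
      rcases (Nat.dvd_prime hp').mp hdp' with hv | hv
      · exact hv
      · exfalso
        rw [hv] at haMeq
        exact hpaM (by rw [haMeq]; exact ⟨d2' * (dq' * dr'), by ring⟩)
    rw [hdp'v] at haMeq
    have hdr'v : dr' = 1 := by
      rcases (Nat.dvd_prime hr').mp hdr' with hv | hv
      · exact hv
      · exfalso
        rw [hv] at haMeq
        exact hraM (by rw [haMeq]; exact ⟨d2' * (1 * dq'), by ring⟩)
    rw [hdr'v] at haMeq
    have hdq'v : dq' = q := by
      rcases (Nat.dvd_prime hq').mp hdq' with hv | hv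
      · exfalso
        rw [hv] at haMeq
        refine absurd hqaM ?_
        rw [haMeq]
        exact prime_dvd_quad hq' hd2' (one_dvd 1) (one_dvd 1) (one_dvd 1) ndq2 ndq1 ndq1 ndq1
      · exact hv
    rw [hdq'v] at haMeq
    -- aM = d2' * (1 * (q * 1))
    have hrN : r ∣ N := hraN.trans haNdvdN
    have hN0r : ((N : ℕ) : ZMod r) = 0 := (ZMod.natCast_eq_zero_iff N r).mpr hrN
    have hM4 : ((M : ℕ) : ZMod r) = -4 := by
      have h' : ((M : ℕ) : ZMod r) + 4 = 0 := by
        rw [← hN0r, hNM4]; push_cast; ring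
      linear_combination h'
    have hbMr : ((bM : ℕ) : ZMod r) ≠ 0 := by
      intro h0
      have hdvd : r ∣ bM := (ZMod.natCast_eq_zero_iff bM r).mp h0
      have hrM : r ∣ M := by
        rw [← hMeq]
        exact dvd_mul_of_dvd_left (dvd_pow hdvd two_ne_zero) aM
      exact hnotboth r hr' hr2 hrN hrM
    have hd2ne : ((d2' : ℕ) : ZMod r) ≠ 0 := by
      intro h0
      exact ndr2 (((ZMod.natCast_eq_zero_iff d2' r).mp h0).trans hd2')
    obtain ⟨c, hc⟩ : ∃ c : ZMod r, c * c = ((d2' : ℕ) : ZMod r) := by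
      rcases (Nat.dvd_prime Nat.prime_two).mp hd2' with h | h
      · exact ⟨1, by rw [h]; norm_num⟩
      · obtain ⟨s, hs⟩ := (ZMod.exists_sq_eq_two_iff hr2).mpr (Or.inl hr)
        refine ⟨s, ?_⟩
        rw [h]
        push_cast
        exact hs.symm
    have hcne : c ≠ 0 := fun h0 => hd2ne (by rw [← hc, h0, mul_zero])
    obtain ⟨i, hi⟩ : ∃ i : ZMod r, (-1 : ZMod r) = i * i := by
      obtain ⟨i, hi⟩ := ZMod.exists_sq_eq_neg_one_iff.mpr (show r % 4 ≠ 3 by omega)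
      exact ⟨i, hi⟩
    have hEq : ((bM : ZMod r)) ^ 2 * (((d2' : ℕ) : ZMod r) * (q : ZMod r)) = -4 := by
      have h' : ((bM ^ 2 * aM : ℕ) : ZMod r) = -4 := by rw [hMeq]; exact hM4
      rw [haMeq] at h'
      push_cast at h'
      linear_combination h'
    have hne0 : (((q : ℤ)) : ZMod r) ≠ 0 := by
      have h1 : ((q : ℕ) : ZMod r) ≠ 0 :=
        fun h0 => ndrq ((ZMod.natCast_eq_zero_iff q r).mp h0)
      intro h0; apply h1; exact_mod_cast h0
    have hsq : IsSquare (((q : ℤ)) : ZMod r) := by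
      have hcast : (((q : ℤ)) : ZMod r) = ((q : ℕ) : ZMod r) := by push_cast; rfl
      rw [hcast]
      refine ⟨2 * i * (c * (bM : ZMod r))⁻¹, ?_⟩
      have hu : c * ((bM : ℕ) : ZMod r) ≠ 0 := mul_ne_zero hcne hbMr
      field_simp
      linear_combination hEq + ((q : ZMod r)) * ((bM : ZMod r)) ^ 2 * hc
        + 4 * hi
    have h1 := (legendreSym.eq_one_iff r hne0).mpr hsq
    rw [hlegq] at h1
    norm_num at h1
  -- (p,q,1) : ε = pq, contradiction
  · exfalso
    have hrN' : ¬ r ∣ aN := by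
      rw [haNeq]
      exact prime_dvd_quad hr' hd2 (dvd_refl p) (dvd_refl q) (one_dvd 1) ndr2 ndrp ndrq ndr1
    have hraM : r ∣ aM := (hlink r hr' hfr).1 hrN'
    have hpaN : p ∣ aN := by rw [haNeq]; exact ⟨d2 * (q * 1), by ring⟩
    have hqaN : q ∣ aN := by rw [haNeq]; exact ⟨d2 * (p * 1), by ring⟩
    have hpaM : ¬ p ∣ aM := (hlink p hp' hfp).2 hpaN
    have hqaM : ¬ q ∣ aM := (hlink q hq' hfq).2 hqaN
    have hdp'v : dp' = 1 := by
      rcases (Nat.dvd_prime hp').mp hdp' with hv | hv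
      · exact hv
      · exfalso
        rw [hv] at haMeq
        exact hpaM (by rw [haMeq]; exact ⟨d2' * (dq' * dr'), by ring⟩)
    rw [hdp'v] at haMeq
    have hdq'v : dq' = 1 := by
      rcases (Nat.dvd_prime hq').mp hdq' with hv | hv
      · exact hv
      · exfalso
        rw [hv] at haMeq
        exact hqaM (by rw [haMeq]; exact ⟨d2' * (1 * dr'), by ring⟩)
    rw [hdq'v] at haMeq
    have hdr'v : dr' = r := by
      rcases (Nat.dvd_prime hr').mp hdr' with hv | hv
      · exfalso
        rw [hv] at haMeq
        refine absurd hraM ?_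
        rw [haMeq]
        exact prime_dvd_quad hr' hd2' (one_dvd 1) (one_dvd 1) (one_dvd 1) ndr2 ndr1 ndr1 ndr1
      · exact hv
    rw [hdr'v] at haMeq
    -- aM = d2' * (1 * (1 * r)), aN = d2 * (p * (q * 1))
    rcases (Nat.dvd_prime Nat.prime_two).mp hd2' with hv | hv
    · -- d2' = 1 : mod p
      rw [hv] at haMeq
      haveI : NeZero p := ⟨hp'.pos.ne'⟩
      have hpN : p ∣ N := hpaN.trans haNdvdN
      have hN0p : ((N : ℕ) : ZMod p) = 0 := (ZMod.natCast_eq_zero_iff N p).mpr hpN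
      have hM4p : ((M : ℕ) : ZMod p) = -4 := by
        have h' : ((M : ℕ) : ZMod p) + 4 = 0 := by
          rw [← hN0p, hNM4]; push_cast; ring
        linear_combination h'
      have hbMp : ((bM : ℕ) : ZMod p) ≠ 0 := by
        intro h0
        have hdvd : p ∣ bM := (ZMod.natCast_eq_zero_iff bM p).mp h0
        have hpM : p ∣ M := by
          rw [← hMeq]
          exact dvd_mul_of_dvd_left (dvd_pow hdvd two_ne_zero) aM
        exact hnotboth p hp' hp2 hpN hpM
      have hEq : ((bM : ZMod p)) ^ 2 * (r : ZMod p) = -4 := by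
        have h' : ((bM ^ 2 * aM : ℕ) : ZMod p) = -4 := by rw [hMeq]; exact hM4p
        rw [haMeq] at h'
        push_cast at h'
        linear_combination h'
      have hrecp : legendreSym p (r : ℤ) = 1 := by
        have h := legendreSym.quadratic_reciprocity_one_mod_four (p := r) (q := p)
          (by omega) hp2
        exact h.trans hlegp
      have hrne : ((r : ℤ) : ZMod p) ≠ 0 := by
        have h1 : ((r : ℕ) : ZMod p) ≠ 0 :=
          fun h0 => ndpr ((ZMod.natCast_eq_zero_iff r p).mp h0)
        intro h0; apply h1; exact_mod_cast h0
      obtain ⟨cr, hcr⟩ := (legendreSym.eq_one_iff p hrne).mp hrecp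
      have hcr' : ((r : ℕ) : ZMod p) = cr * cr := by exact_mod_cast hcr
      have h2ne : (2 : ZMod p) ≠ 0 := by
        intro h0
        have h1 : ((2 : ℕ) : ZMod p) = 0 := by exact_mod_cast h0
        exact ndp2 ((ZMod.natCast_eq_zero_iff 2 p).mp h1)
      have hisq : IsSquare (-1 : ZMod p) := by
        refine ⟨cr * ((bM : ℕ) : ZMod p) * 2⁻¹, ?_⟩
        field_simp
        linear_combination - hEq + ((bM : ZMod p)) ^ 2 * hcr'
      exact (ZMod.exists_sq_eq_neg_one_iff.mp hisq) hp
    · -- d2' = 2 : parity + mod 4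
      rw [hv] at haMeq
      have h2aN : 2 ∣ aN := hlink2.mpr (by rw [haMeq]; exact ⟨1 * (1 * r), rfl⟩)
      have hd2v : d2 = 2 := by
        rcases h2cases with hv2 | hv2
        · exfalso
          rw [hv2] at haNeq
          refine absurd h2aN ?_
          rw [haNeq]
          exact prime_dvd_quad Nat.prime_two (dvd_refl 1) (dvd_refl p) (dvd_refl q) (one_dvd 1)
            nd21 nd2p nd2q nd21
        · exact hv2
      rw [hd2v] at haNeq
      have e1 : N = 2 * ((p * q) * bN ^ 2) := by rw [← hNeq, haNeq]; ring
      have e2 : M = 2 * (r * bM ^ 2) := by rw [← hMeq, haMeq]; ring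
      have heq : (p * q) * bN ^ 2 = r * bM ^ 2 + 2 := by omega
      exact mod4_contradiction hpq4 (by omega) heq
  -- (p,q,r) : ε = pqr
  · refine ⟨(bN : ℤ), (p : ℤ) * q * r, Set.mem_insert_iff.mpr (Or.inr
      (Set.mem_insert_iff.mpr (Or.inr (Set.mem_insert_iff.mpr (Or.inr rfl))))), ?_⟩
    have ha : (aN : ℤ) = (d2 : ℤ) * ((p : ℤ) * q * r) := by rw [haNeq]; push_cast; ring
    rcases h2cases with hv | hv <;> rw [hv] at ha
    · left; rw [hNZ, ha]; push_cast; ring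
    · right; left; rw [hNZ, ha]; push_cast; ring
end

section
/- Let p and q be distinct prime numbers with p ≡ 1 (mod 4), q ≡ 1 (mod 4), and Legendre symbol (p/q) = −1. Suppose z and t are integers with z > 0 satisfying z² − 2pq·t² = 1. Then there exist an integer m and ε ∈ {1, 2, pq, 2pq} such that z + 1 = 2·ε·m². -/
private lemma extract_sq {A B ε δ s : ℤ} (h : A * B = ε * δ * s ^ 2) (hco : IsCoprime A B)
    (hε : ε ∣ A) (hδ : δ ∣ B) (hA : 0 < A) (hε0 : 0 < ε) (hδ0 : δ ≠ 0) :
    ∃ m : ℤ, A = ε * m ^ 2 := by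
  obtain ⟨A₁, rfl⟩ := hε
  obtain ⟨B₁, rfl⟩ := hδ
  have hεδ : ε * δ ≠ 0 := mul_ne_zero (ne_of_gt hε0) hδ0
  have h1 : A₁ * B₁ = s ^ 2 := by
    apply mul_left_cancel₀ hεδ
    linear_combination h
  have hco1 : IsCoprime A₁ B₁ :=
    (hco.of_isCoprime_of_dvd_left (dvd_mul_left A₁ ε)).of_isCoprime_of_dvd_right
      (dvd_mul_left B₁ δ)
  obtain ⟨m, hm⟩ := Int.sq_of_isCoprime hco1 h1
  have hA₁ : 0 < A₁ := by nlinarith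
  rcases hm with hm | hm
  · exact ⟨m, by rw [hm]⟩
  · nlinarith [sq_nonneg m]

private lemma leg_eq_one (r : ℕ) [Fact r.Prime] (c m : ℤ) (hc : ¬ (r : ℤ) ∣ c)
    (d : ZMod r) (hd : d ≠ 0) (h : ((c : ℤ) : ZMod r) * ((m : ℤ) : ZMod r) ^ 2 = d ^ 2) :
    legendreSym r c = 1 := by
  have hc' : ((c : ℤ) : ZMod r) ≠ 0 := by
    rwa [Ne, ZMod.intCast_zmod_eq_zero_iff_dvd]
  rw [legendreSym.eq_one_iff r hc']
  have hm : ((m : ℤ) : ZMod r) ≠ 0 := by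
    rintro h0
    have hd2 : d ^ 2 = 0 := by rw [← h, h0]; ring
    exact hd (pow_eq_zero_iff (by norm_num : (2:ℕ) ≠ 0) |>.mp hd2)
  refine ⟨d / (m : ZMod r), ?_⟩
  field_simp
  linear_combination h

theorem norm_one_unit_square_class'' (p q : ℕ)
    [Fact p.Prime] [Fact q.Prime] (hpq : p ≠ q)
    (hp : p % 4 = 1) (hq : q % 4 = 1)
    (hleg : legendreSym q (p : ℤ) = -1)
    (z t : ℤ) (hz : 0 < z) (hpell : z ^ 2 - 2 * (p : ℤ) * q * t ^ 2 = 1) :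
    ∃ m : ℤ, ∃ ε ∈ ({1, 2, (p : ℤ) * q, 2 * (p : ℤ) * q} : Set ℤ),
      z + 1 = 2 * ε * m ^ 2 := by
  have pP : p.Prime := Fact.out
  have qP : q.Prime := Fact.out
  have hp2 : p ≠ 2 := by rintro rfl; omega
  have hq2 : q ≠ 2 := by rintro rfl; omega
  have hqp : ¬ (q : ℤ) ∣ (p : ℤ) := by
    rw [Int.natCast_dvd_natCast]
    intro hdvd
    exact hpq ((Nat.prime_dvd_prime_iff_eq qP pP).mp hdvd).symm
  have hpq' : ¬ (p : ℤ) ∣ (q : ℤ) := by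
    rw [Int.natCast_dvd_natCast]
    intro hdvd
    exact hpq ((Nat.prime_dvd_prime_iff_eq pP qP).mp hdvd)
  -- z is odd
  have hzodd : Odd z := by
    rcases Int.even_or_odd z with he | ho
    · exfalso
      have h1 : Odd (z ^ 2) := ⟨(p : ℤ) * q * t ^ 2, by linarith⟩
      have h2 : Even (z ^ 2) := by
        rw [sq]; exact he.mul_right z
      exact (Int.not_odd_iff_even.mpr h2) h1
    · exact ho
  obtain ⟨k, hk⟩ := hzodd
  subst hk
  by_cases hk0 : k = 0
  · subst hk0
    exact ⟨1, 1, by simp, by norm_num⟩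
  have hkpos : 0 < k := by omega
  -- basic equation
  have h4 : 2 * (2 * (k * (k + 1))) = 2 * ((p : ℤ) * q * t ^ 2) := by linear_combination hpell
  have h1 : 2 * (k * (k + 1)) = (p : ℤ) * q * t ^ 2 :=
    mul_left_cancel₀ (by norm_num : (2 : ℤ) ≠ 0) h4
  -- t is even
  have hpodd : Odd (p : ℤ) := by exact_mod_cast pP.odd_of_ne_two hp2
  have hqodd : Odd (q : ℤ) := by exact_mod_cast qP.odd_of_ne_two hq2
  have hteven : Even t := by
    have hev : Even ((p : ℤ) * q * t ^ 2) := ⟨k * (k + 1), by linarith⟩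
    rcases Int.even_mul.mp hev with h | h
    · exfalso
      rcases Int.even_mul.mp h with h' | h'
      · exact (Int.not_odd_iff_even.mpr h') hpodd
      · exact (Int.not_odd_iff_even.mpr h') hqodd
    · exact (Int.even_pow.mp h).1
  obtain ⟨s, hs⟩ := hteven
  have h8 : 2 * ((k + 1) * k) = 2 * (2 * (p : ℤ) * q * s ^ 2) := by
    rw [hs] at h1; linear_combination h1
  have hAB : (k + 1) * k = 2 * (p : ℤ) * q * s ^ 2 :=
    mul_left_cancel₀ (by norm_num : (2 : ℤ) ≠ 0) h8
  -- primes and coprimality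
  have hpZ : Prime ((p : ℕ) : ℤ) := Nat.prime_iff_prime_int.mp pP
  have hqZ : Prime ((q : ℕ) : ℤ) := Nat.prime_iff_prime_int.mp qP
  have hco : IsCoprime (k + 1 : ℤ) k := ⟨1, -1, by ring⟩
  have c2p : IsCoprime (2 : ℤ) (p : ℤ) := by
    have := ((Nat.coprime_primes Nat.prime_two pP).mpr (Ne.symm hp2)).isCoprime
    exact_mod_cast this
  have c2q : IsCoprime (2 : ℤ) (q : ℤ) := by
    have := ((Nat.coprime_primes Nat.prime_two qP).mpr (Ne.symm hq2)).isCoprime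
    exact_mod_cast this
  have cpq : IsCoprime ((p : ℤ)) (q : ℤ) := by
    have := ((Nat.coprime_primes pP qP).mpr hpq).isCoprime
    exact_mod_cast this
  have hppos : (0 : ℤ) < p := by exact_mod_cast pP.pos
  have hqpos : (0 : ℤ) < q := by exact_mod_cast qP.pos
  -- divisibility disjunctions
  have hd2 : (2 : ℤ) ∣ (k + 1) ∨ (2 : ℤ) ∣ k :=
    Int.prime_two.dvd_mul.mp ⟨(p : ℤ) * q * s ^ 2, by linear_combination hAB⟩
  have hdp : (p : ℤ) ∣ (k + 1) ∨ (p : ℤ) ∣ k :=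
    hpZ.dvd_mul.mp ⟨2 * (q : ℤ) * s ^ 2, by linear_combination hAB⟩
  have hdq : (q : ℤ) ∣ (k + 1) ∨ (q : ℤ) ∣ k :=
    hqZ.dvd_mul.mp ⟨2 * (p : ℤ) * s ^ 2, by linear_combination hAB⟩
  have hApos : (0 : ℤ) < k + 1 := by omega
  -- case analysis
  rcases hd2 with h2A | h2B <;> rcases hdp with hpA | hpB <;> rcases hdq with hqA | hqB
  · -- 2, p, q ∣ k+1 : ε = 2pq
    obtain ⟨m, hm⟩ := extract_sq (s := s) (A := k + 1) (B := k) (ε := 2 * (p : ℤ) * q) (δ := 1)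
      (by linear_combination hAB) hco
      (by rw [mul_assoc]; exact c2p.mul_right c2q |>.mul_dvd h2A ((cpq.mul_dvd hpA hqA)))
      (one_dvd _) hApos (by positivity) one_ne_zero
    exact ⟨m, 2 * (p : ℤ) * q, by simp, by linarith⟩
  · -- 2, p ∣ k+1, q ∣ k : bad, B = q * n^2
    exfalso
    obtain ⟨n, hn⟩ := extract_sq (s := s) (A := k) (B := k + 1) (ε := (q : ℤ)) (δ := 2 * (p : ℤ))
      (by linear_combination hAB) hco.symm hqB (c2p.mul_dvd h2A hpA) hkpos hqpos
      (by positivity)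
    -- k ≡ -1 mod p, so q * n^2 ≡ -1 mod p; -1 is a square mod p
    obtain ⟨x, hx⟩ := ZMod.exists_sq_eq_neg_one_iff.mpr (by omega : p % 4 ≠ 3)
    have hx0 : x ≠ 0 := by
      rintro rfl
      simp only [mul_zero] at hx
      have : (1 : ZMod p) ≠ 0 := one_ne_zero
      rw [neg_eq_zero] at hx
      exact this hx
    have hkcast : ((k : ℤ) : ZMod p) = -1 := by
      have : (((k + 1 : ℤ)) : ZMod p) = 0 := (ZMod.intCast_zmod_eq_zero_iff_dvd _ p).mpr hpA
      push_cast at this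
      linear_combination this
    have key : (((q : ℤ) : ZMod p)) * ((n : ℤ) : ZMod p) ^ 2 = x ^ 2 := by
      have hc := congrArg (fun y : ℤ => (y : ZMod p)) hn
      simp only [Int.cast_mul, Int.cast_pow] at hc
      rw [hkcast] at hc
      rw [← hc, sq]; exact hx
    have hleg1 : legendreSym p (q : ℤ) = 1 := leg_eq_one p (q : ℤ) n hpq' x hx0 key
    rw [legendreSym.quadratic_reciprocity_one_mod_four hp hq2, hleg1] at hleg
    norm_num at hleg
  · -- 2, q ∣ k+1, p ∣ k : bad, B = p * n^2
    exfalso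
    obtain ⟨n, hn⟩ := extract_sq (s := s) (A := k) (B := k + 1) (ε := (p : ℤ)) (δ := 2 * (q : ℤ))
      (by linear_combination hAB) hco.symm hpB (c2q.mul_dvd h2A hqA) hkpos hppos
      (by positivity)
    obtain ⟨x, hx⟩ := ZMod.exists_sq_eq_neg_one_iff.mpr (by omega : q % 4 ≠ 3)
    have hx0 : x ≠ 0 := by
      rintro rfl
      simp only [mul_zero] at hx
      rw [neg_eq_zero] at hx
      exact one_ne_zero hx
    have hkcast : ((k : ℤ) : ZMod q) = -1 := by
      have : (((k + 1 : ℤ)) : ZMod q) = 0 := (ZMod.intCast_zmod_eq_zero_iff_dvd _ q).mpr hqA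
      push_cast at this
      linear_combination this
    have key : (((p : ℤ) : ZMod q)) * ((n : ℤ) : ZMod q) ^ 2 = x ^ 2 := by
      have hc := congrArg (fun y : ℤ => (y : ZMod q)) hn
      simp only [Int.cast_mul, Int.cast_pow] at hc
      rw [hkcast] at hc
      rw [← hc, sq]; exact hx
    have hleg1 : legendreSym q (p : ℤ) = 1 := leg_eq_one q (p : ℤ) n hqp x hx0 key
    rw [hleg1] at hleg
    norm_num at hleg
  · -- 2 ∣ k+1, p, q ∣ k : ε = 2
    obtain ⟨m, hm⟩ := extract_sq (s := s) (A := k + 1) (B := k) (ε := (2 : ℤ)) (δ := (p : ℤ) * q)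
      (by linear_combination hAB) hco h2A (cpq.mul_dvd hpB hqB) hApos (by norm_num)
      (by positivity)
    exact ⟨m, 2, by simp, by linarith⟩
  · -- p, q ∣ k+1, 2 ∣ k : ε = pq
    obtain ⟨m, hm⟩ := extract_sq (s := s) (A := k + 1) (B := k) (ε := (p : ℤ) * q) (δ := (2 : ℤ))
      (by linear_combination hAB) hco (cpq.mul_dvd hpA hqA) h2B hApos (by positivity)
      (by norm_num)
    exact ⟨m, (p : ℤ) * q, by simp, by linarith⟩
  · -- p ∣ k+1, 2, q ∣ k : bad, A = p * m^2
    exfalso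
    obtain ⟨m, hm⟩ := extract_sq (s := s) (A := k + 1) (B := k) (ε := (p : ℤ)) (δ := 2 * (q : ℤ))
      (by linear_combination hAB) hco hpA (c2q.mul_dvd h2B hqB) hApos hppos
      (by positivity)
    have hkcast : ((k : ℤ) : ZMod q) = 0 := (ZMod.intCast_zmod_eq_zero_iff_dvd _ q).mpr hqB
    have key : (((p : ℤ) : ZMod q)) * ((m : ℤ) : ZMod q) ^ 2 = (1 : ZMod q) ^ 2 := by
      have hc := congrArg (fun y : ℤ => (y : ZMod q)) hm
      simp only [Int.cast_mul, Int.cast_pow, Int.cast_add, Int.cast_one] at hc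
      rw [hkcast] at hc
      rw [← hc]; ring
    have hleg1 : legendreSym q (p : ℤ) = 1 := leg_eq_one q (p : ℤ) m hqp 1 one_ne_zero key
    rw [hleg1] at hleg
    norm_num at hleg
  · -- q ∣ k+1, 2, p ∣ k : bad, A = q * m^2
    exfalso
    obtain ⟨m, hm⟩ := extract_sq (s := s) (A := k + 1) (B := k) (ε := (q : ℤ)) (δ := 2 * (p : ℤ))
      (by linear_combination hAB) hco hqA (c2p.mul_dvd h2B hpB) hApos hqpos
      (by positivity)
    have hkcast : ((k : ℤ) : ZMod p) = 0 := (ZMod.intCast_zmod_eq_zero_iff_dvd _ p).mpr hpB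
    have key : (((q : ℤ) : ZMod p)) * ((m : ℤ) : ZMod p) ^ 2 = (1 : ZMod p) ^ 2 := by
      have hc := congrArg (fun y : ℤ => (y : ZMod p)) hm
      simp only [Int.cast_mul, Int.cast_pow, Int.cast_add, Int.cast_one] at hc
      rw [hkcast] at hc
      rw [← hc]; ring
    have hleg1 : legendreSym p (q : ℤ) = 1 := leg_eq_one p (q : ℤ) m hpq' 1 one_ne_zero key
    rw [legendreSym.quadratic_reciprocity_one_mod_four hp hq2, hleg1] at hleg
    norm_num at hleg
  · -- 2, p, q ∣ k : ε = 1
    obtain ⟨m, hm⟩ := extract_sq (s := s) (A := k + 1) (B := k) (ε := (1 : ℤ)) (δ := 2 * (p : ℤ) * q)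
      (by linear_combination hAB) hco (one_dvd _)
      (by rw [mul_assoc]; exact c2p.mul_right c2q |>.mul_dvd h2B (cpq.mul_dvd hpB hqB))
      hApos one_pos (by positivity)
    exact ⟨m, 1, by simp, by linarith⟩
end

section
/- Let p and q be distinct prime numbers with p ≡ 1 (mod 4), q ≡ 1 (mod 4), and Legendre symbol (p/q) = −1. Then there are no integers m, n satisfying any of the equations m²·p − 2n²·q = 1, m²·q − 2n²·p = 1, 2m²·p − n²·q = 1, or 2m²·q − n²·p = 1. -/
private lemma aux_one (ℓ r : ℕ) [Fact ℓ.Prime] (a : ZMod ℓ)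
    (h : a ^ 2 * (r : ZMod ℓ) = 1) : legendreSym ℓ (r : ℤ) = 1 := by
  have ha : a ≠ 0 := by
    rintro rfl; simp at h
  have hr : ((r : ℤ) : ZMod ℓ) ≠ 0 := by
    push_cast
    rintro h0; rw [h0, mul_zero] at h; exact one_ne_zero h.symm
  rw [legendreSym.eq_one_iff ℓ hr]
  push_cast
  refine ⟨a⁻¹, ?_⟩
  have : (r : ZMod ℓ) = (a⁻¹) ^ 2 := by
    field_simp
    linear_combination h
  rw [this]; ring

private lemma aux_neg (ℓ r : ℕ) [Fact ℓ.Prime] (hl : ℓ % 4 = 1) (a : ZMod ℓ)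
    (h : a ^ 2 * (r : ZMod ℓ) = -1) : legendreSym ℓ (r : ℤ) = 1 := by
  obtain ⟨b, hb⟩ : IsSquare (-1 : ZMod ℓ) := by
    rw [ZMod.exists_sq_eq_neg_one_iff]; omega
  apply aux_one ℓ r (b * a)
  have : (b * a) ^ 2 * (r : ZMod ℓ) = (b * b) * (a ^ 2 * r) := by ring
  rw [this, ← hb, h]; ring

theorem no_solutions_four_equations (p q : ℕ)
    [Fact p.Prime] [Fact q.Prime] (hpq : p ≠ q)
    (hp : p % 4 = 1) (hq : q % 4 = 1)
    (hleg : legendreSym q (p : ℤ) = -1) :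
    (¬ ∃ m n : ℤ, m ^ 2 * p - 2 * n ^ 2 * q = 1) ∧
    (¬ ∃ m n : ℤ, m ^ 2 * q - 2 * n ^ 2 * p = 1) ∧
    (¬ ∃ m n : ℤ, 2 * m ^ 2 * p - n ^ 2 * q = 1) ∧
    (¬ ∃ m n : ℤ, 2 * m ^ 2 * q - n ^ 2 * p = 1) := by
  have hq2 : q ≠ 2 := by
    intro h; rw [h] at hq; omega
  have hleg' : legendreSym p (q : ℤ) = -1 := by
    rw [← legendreSym.quadratic_reciprocity_one_mod_four hp hq2]; exact hleg
  refine ⟨?_, ?_, ?_, ?_⟩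
  · rintro ⟨m, n, h⟩
    have h' := congrArg (Int.cast : ℤ → ZMod q) h
    push_cast at h'
    rw [ZMod.natCast_self] at h'
    have : (m : ZMod q) ^ 2 * (p : ZMod q) = 1 := by linear_combination h'
    have := aux_one q p _ this
    omega
  · rintro ⟨m, n, h⟩
    have h' := congrArg (Int.cast : ℤ → ZMod p) h
    push_cast at h'
    rw [ZMod.natCast_self] at h'
    have : (m : ZMod p) ^ 2 * (q : ZMod p) = 1 := by linear_combination h'
    have := aux_one p q _ this
    omega
  · rintro ⟨m, n, h⟩
    have h' := congrArg (Int.cast : ℤ → ZMod p) h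
    push_cast at h'
    rw [ZMod.natCast_self] at h'
    have : (n : ZMod p) ^ 2 * (q : ZMod p) = -1 := by linear_combination -h'
    have := aux_neg p q hp _ this
    omega
  · rintro ⟨m, n, h⟩
    have h' := congrArg (Int.cast : ℤ → ZMod q) h
    push_cast at h'
    rw [ZMod.natCast_self] at h'
    have : (n : ZMod q) ^ 2 * (p : ZMod q) = -1 := by linear_combination -h'
    have := aux_neg q p hq _ this
    omega
end
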